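/- arXiv:2211.08135 — 3 statements merged into one kernel-verified Lean document; each statement's English description precedes it below -/
import Mathlib

section
/- With à the cover of an Artin algebra A as in the construction, every simple right Ã-module embeds into the regular module Ã; consequently the delooping level of à is 0. -/
open CategoryTheory MulOpposite

universe u

/-- `f : P →ₗ[R] X` is a projective cover: `P` is projective, `f` is surjective, and the
kernel of `f` is superfluous in `P`. -/
def IsProjCover (R : Type u) [Ring R] {P X : Type u} [AddCommGroup P] [Module R P]
    [AddCommGroup X] [Module R X] (f : P →ₗ[R] X) : Prop :=
  Module.Projective R P ∧ Function.Surjective f ∧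
    ∀ N : Submodule R P, N ⊔ LinearMap.ker f = ⊤ → N = ⊤

/-- `IsSyzygy R n X K` means that `K` is an `n`-th syzygy `Ω^n(X)` of `X`, obtained by
iteratively taking kernels of projective covers. -/
inductive IsSyzygy (R : Type u) [Ring R] : ℕ → ModuleCat.{u} R → ModuleCat.{u} R → Prop
  | zero (X : ModuleCat.{u} R) : IsSyzygy R 0 X X
  | succ {n : ℕ} {X K P : ModuleCat.{u} R} (f : P ⟶ X) (hf : IsProjCover R f.hom)
      (h : IsSyzygy R n (ModuleCat.of R (LinearMap.ker f.hom)) K) : IsSyzygy R (n + 1) X K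

/-- `X` is a direct summand of `Y`. -/
def IsDirectSummandOf (R : Type u) [Ring R] (X Y : Type u) [AddCommGroup X] [Module R X]
    [AddCommGroup Y] [Module R Y] : Prop :=
  ∃ (i : X →ₗ[R] Y) (r : Y →ₗ[R] X), r ∘ₗ i = LinearMap.id

/-- The delooping level of a module `X`: the least `d` such that `Ω^d(X)` is a direct
summand of `P ⊕ Ω^{d+1}(M)` for some finitely generated projective module `P` and some
finitely generated module `M`; it is `⊤` (i.e. `∞`) if no such `d` exists. -/
noncomputable def delLevel (R : Type u) [Ring R] (X : ModuleCat.{u} R) : ℕ∞ :=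
  sInf {e : ℕ∞ | ∃ d : ℕ, e = (d : ℕ∞) ∧
    ∃ M P S T : ModuleCat.{u} R, Module.Finite R M ∧ Module.Projective R P ∧
      Module.Finite R P ∧ IsSyzygy R d X S ∧ IsSyzygy R (d + 1) M T ∧
      IsDirectSummandOf R S (P × T)}

/-- The delooping level of a ring `R`, computed with left `R`-modules: the supremum
(= maximum, for an Artin algebra) of the delooping levels of the simple modules. -/
noncomputable def delAlg (R : Type u) [Ring R] : ℕ∞ :=
  ⨆ (S : ModuleCat.{u} R) (_ : IsSimpleModule R S), delLevel R S

/-- The delooping level of a ring `R` computed with right `R`-modules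
(= left `Rᵐᵒᵖ`-modules), as in the paper. -/
noncomputable def delAlgRight (R : Type u) [Ring R] : ℕ∞ := delAlg Rᵐᵒᵖ

/-- A ring is an Artin algebra if it is a module-finite algebra over some commutative
artinian ring. -/
def IsArtinAlgebra (A : Type u) [Ring A] : Prop :=
  ∃ (k : Type u) (_ : CommRing k) (_ : IsArtinianRing k) (_ : Algebra k A),
    Module.Finite k A

/-- The radical of a module: the intersection of its maximal submodules. -/
def modRad (R : Type u) [Ring R] (N : Type u) [AddCommGroup N] [Module R N] :
    Submodule R N := sInf {P : Submodule R N | IsCoatom P}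

/-- `Z` belongs to `add N`: `Z` is a direct summand of a finite direct sum of copies
of `N`. -/
def InAdd (R : Type u) [Ring R] (N Z : Type u) [AddCommGroup N] [Module R N]
    [AddCommGroup Z] [Module R Z] : Prop :=
  ∃ n : ℕ, IsDirectSummandOf R Z (Fin n → N)

section Constructions

/-- The Jacobson radical of `A` as a two-sided ideal. -/
noncomputable def radT (A : Type u) [Ring A] : TwoSidedIdeal A :=
  (⊥ : TwoSidedIdeal A).jacobson

/-- The semisimple quotient `A/rad(A)`. -/
def Sq (A : Type u) [Ring A] : Type u := (radT A).ringCon.Quotient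

noncomputable instance (A : Type u) [Ring A] : Ring (Sq A) :=
  inferInstanceAs (Ring (radT A).ringCon.Quotient)

/-- The natural projection `A → A/rad(A)`. -/
noncomputable def sqMk (A : Type u) [Ring A] : A →+* Sq A := RingCon.mk' _

/-- `B = T(A/rad(A))`, the trivial extension of the semisimple quotient of `A`. -/
def BB (A : Type u) [Ring A] : Type u := TrivSqZeroExt (Sq A) (Sq A)

noncomputable instance (A : Type u) [Ring A] : Ring (BB A) :=
  inferInstanceAs (Ring (TrivSqZeroExt (Sq A) (Sq A)))

/-- The projection `B = T(A/rad(A)) → A/rad(A)`, a ring homomorphism. -/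
noncomputable def bbFst (A : Type u) [Ring A] : BB A →+* Sq A where
  toFun := TrivSqZeroExt.fst
  map_one' := TrivSqZeroExt.fst_one (R := Sq A) (M := Sq A)
  map_mul' x y := TrivSqZeroExt.fst_mul x y
  map_zero' := TrivSqZeroExt.fst_zero (R := Sq A) (M := Sq A)
  map_add' x y := TrivSqZeroExt.fst_add x y

/-! ### The `A`-`B`-bimodule `M = A/rad(A)` and the upper triangular algebra
`Λ = (A, A/rad(A); 0, B)` -/

/-- `M = A/rad(A)` viewed as an `A`-`B`-bimodule (left action of `A` via `A → A/rad(A)`,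
right action of `B` via `B → A/rad(A)`). -/
def MM (A : Type u) [Ring A] : Type u := Sq A

noncomputable instance (A : Type u) [Ring A] : AddCommGroup (MM A) :=
  inferInstanceAs (AddCommGroup (Sq A))

/-- Left action of `A × B` on `M` through the `A`-component. -/
noncomputable instance (A : Type u) [Ring A] : Module (A × BB A) (MM A) :=
  Module.compHom (Sq A) ((sqMk A).comp (RingHom.fst A (BB A)))

/-- Right action of `A × B` on `M` through the `B`-component. -/
noncomputable instance (A : Type u) [Ring A] : Module (A × BB A)ᵐᵒᵖ (MM A) :=
  Module.compHom (Sq A) (RingHom.op ((bbFst A).comp (RingHom.snd A (BB A))))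

noncomputable instance (A : Type u) [Ring A] :
    SMulCommClass (A × BB A) (A × BB A)ᵐᵒᵖ (MM A) :=
  ⟨fun c c' m => by
    show sqMk A c.1 * ((show Sq A from m) * bbFst A (unop c').2) =
      (sqMk A c.1 * (show Sq A from m)) * bbFst A (unop c').2
    exact (mul_assoc _ _ _).symm⟩

/-- The upper triangular matrix algebra `Λ = (A, A/rad(A); 0, B)`, realized as the
trivial square-zero extension of `A × B` by the bimodule `M = A/rad(A)`. -/
def Lam (A : Type u) [Ring A] : Type u := TrivSqZeroExt (A × BB A) (MM A)

noncomputable instance (A : Type u) [Ring A] : Ring (Lam A) :=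
  inferInstanceAs (Ring (TrivSqZeroExt (A × BB A) (MM A)))

/-! ### The `B`-`A`-bimodule `M' = A/rad(A)` and the cover
`Ã = (A, 0; A/rad(A), B)` -/

/-- `M' = A/rad(A)` viewed as a `B`-`A`-bimodule. -/
def MC (A : Type u) [Ring A] : Type u := Sq A

noncomputable instance (A : Type u) [Ring A] : AddCommGroup (MC A) :=
  inferInstanceAs (AddCommGroup (Sq A))

/-- Left action of `A × B` on `M'` through the `B`-component. -/
noncomputable instance (A : Type u) [Ring A] : Module (A × BB A) (MC A) :=
  Module.compHom (Sq A) ((bbFst A).comp (RingHom.snd A (BB A)))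

/-- Right action of `A × B` on `M'` through the `A`-component. -/
noncomputable instance (A : Type u) [Ring A] : Module (A × BB A)ᵐᵒᵖ (MC A) :=
  Module.compHom (Sq A) (RingHom.op ((sqMk A).comp (RingHom.fst A (BB A))))

noncomputable instance (A : Type u) [Ring A] :
    SMulCommClass (A × BB A) (A × BB A)ᵐᵒᵖ (MC A) :=
  ⟨fun c c' m => by
    show bbFst A c.2 * ((show Sq A from m) * sqMk A (unop c').1) =
      (bbFst A c.2 * (show Sq A from m)) * sqMk A (unop c').1
    exact (mul_assoc _ _ _).symm⟩

/-- The cover `Ã = (A, 0; A/rad(A), B)` of `A`: the lower triangular matrix algebra,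
realized as the trivial square-zero extension of `A × B` by the `B`-`A`-bimodule
`M' = A/rad(A)`. -/
def Cov (A : Type u) [Ring A] : Type u := TrivSqZeroExt (A × BB A) (MC A)

noncomputable instance (A : Type u) [Ring A] : Ring (Cov A) :=
  inferInstanceAs (Ring (TrivSqZeroExt (A × BB A) (MC A)))

/-- The projection `Λ → A × B`. -/
noncomputable def lamFst (A : Type u) [Ring A] : Lam A →+* A × BB A where
  toFun := TrivSqZeroExt.fst
  map_one' := TrivSqZeroExt.fst_one (R := A × BB A) (M := MM A)
  map_mul' x y := TrivSqZeroExt.fst_mul x y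
  map_zero' := TrivSqZeroExt.fst_zero (R := A × BB A) (M := MM A)
  map_add' x y := TrivSqZeroExt.fst_add x y

end Constructions


section Aux

variable {R : Type u} [Ring R]

lemma aux_isUnit_of_left_right {u v w : R} (h1 : u * v = 1) (h2 : w * u = 1) : IsUnit u := by
  have hwv : w = v := by
    calc w = w * (u * v) := by rw [h1, mul_one]
    _ = (w * u) * v := by rw [mul_assoc]
    _ = v := by rw [h2, one_mul]
  exact ⟨⟨u, v, h1, hwv ▸ h2⟩, rfl⟩

lemma aux_prod_isUnit {S : Type u} [Ring S] {x : R × S} (h1 : IsUnit x.1) (h2 : IsUnit x.2) :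
    IsUnit x := by
  obtain ⟨u, hu⟩ := h1
  obtain ⟨v, hv⟩ := h2
  exact ⟨⟨(u.val, v.val), (u.inv, v.inv), by ext <;> simp [u.val_inv, v.val_inv],
    by ext <;> simp [u.inv_val, v.inv_val]⟩, by ext <;> simp [hu, hv]⟩

/-- left inverse for `1 - x` when `x` is in the Jacobson radical. -/
lemma aux_left_inv_one_sub {x : R} (hx : x ∈ Ideal.jacobson (⊥ : Ideal R)) :
    ∃ z, z * (1 - x) = 1 := by
  obtain ⟨z, hz⟩ := Ideal.mem_jacobson_iff.mp hx (-1)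
  rw [Ideal.mem_bot, sub_eq_zero] at hz
  refine ⟨z, ?_⟩
  have h2 : z * (1 - x) = z * -1 * x + z := by noncomm_ring
  rw [h2, hz]

lemma aux_isUnit_one_sub {x : R} (hx : x ∈ Ideal.jacobson (⊥ : Ideal R)) : IsUnit (1 - x) := by
  obtain ⟨z, hz⟩ := aux_left_inv_one_sub hx
  have hzx : z = 1 - -(z * x) := by
    have h2 : z * (1 - x) = z - z * x := by noncomm_ring
    rw [h2] at hz
    rw [sub_neg_eq_add]
    exact sub_eq_iff_eq_add.mp hz
  have hmem : -(z * x) ∈ Ideal.jacobson (⊥ : Ideal R) :=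
    neg_mem (Ideal.mul_mem_left _ z hx)
  obtain ⟨w, hw⟩ := aux_left_inv_one_sub hmem
  rw [← hzx] at hw
  -- hw : w * z = 1, hz : z * (1 - x) = 1
  have hweq : w = 1 - x := by
    calc w = w * (z * (1 - x)) := by rw [hz, mul_one]
    _ = (w * z) * (1 - x) := by rw [mul_assoc]
    _ = 1 - x := by rw [hw, one_mul]
  exact ⟨⟨1 - x, z, hweq ▸ hw, hz⟩, rfl⟩

lemma aux_isUnit_one_add_swap {x y : R} (h : IsUnit (1 + x * y)) : IsUnit (1 + y * x) := by
  obtain ⟨u, hu⟩ := h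
  have key : (1 + x * y) * ↑u⁻¹ = 1 := by rw [← hu]; exact u.mul_inv
  have key2 : (↑u⁻¹ : R) * (1 + x * y) = 1 := by rw [← hu]; exact u.inv_mul
  refine ⟨⟨1 + y * x, 1 - y * ↑u⁻¹ * x, ?_, ?_⟩, rfl⟩
  · have expand : (1 + y * x) * (1 - y * ↑u⁻¹ * x)
        = 1 + y * x - y * ((1 + x * y) * ↑u⁻¹) * x := by noncomm_ring
    rw [expand, key]; noncomm_ring
  · have expand : (1 - y * ↑u⁻¹ * x) * (1 + y * x)
        = 1 + y * x - y * (↑u⁻¹ * (1 + x * y)) * x := by noncomm_ring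
    rw [expand, key2]; noncomm_ring

lemma aux_mem_jacobson_of_forall {x : R} (h : ∀ y, IsUnit (1 + y * x)) :
    x ∈ Ideal.jacobson (⊥ : Ideal R) := by
  rw [Ideal.mem_jacobson_iff]
  intro y
  obtain ⟨u, hu⟩ := h y
  refine ⟨↑u⁻¹, ?_⟩
  rw [Ideal.mem_bot, sub_eq_zero]
  calc ↑u⁻¹ * y * x + ↑u⁻¹ = ↑u⁻¹ * (1 + y * x) := by noncomm_ring
  _ = 1 := by rw [← hu]; exact u.inv_mul

lemma aux_forall_of_mem_jacobson {x : R} (hx : x ∈ Ideal.jacobson (⊥ : Ideal R)) (y : R) :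
    IsUnit (1 + y * x) := by
  have : -(y * x) ∈ Ideal.jacobson (⊥ : Ideal R) := neg_mem (Ideal.mul_mem_left _ y hx)
  simpa [sub_neg_eq_add] using aux_isUnit_one_sub this

/-- Finite product of semisimple modules is semisimple. -/
lemma aux_pi_semisimple {Q ι : Type u} [Ring Q] [Finite ι] (Ms : ι → Type u)
    [∀ i, AddCommGroup (Ms i)] [∀ i, Module Q (Ms i)] [∀ i, IsSemisimpleModule Q (Ms i)] :
    IsSemisimpleModule Q (∀ i, Ms i) := by
  classical
  exact isSemisimpleModule_of_isSemisimpleModule_submodule'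
    (fun i => .congr (LinearEquiv.ofInjective (LinearMap.single Q Ms i)
      (LinearMap.ker_eq_bot.mp (LinearMap.ker_single Q Ms i))).symm)
    (LinearMap.iSup_range_single Q Ms)

/-- A left artinian ring with trivial Jacobson radical is semisimple. -/
lemma aux_semisimple_of_artinian {Q : Type u} [Ring Q] [IsArtinian Q Q]
    (hJ : Ideal.jacobson (⊥ : Ideal Q) = ⊥) : IsSemisimpleRing Q := by
  classical
  obtain ⟨I₀, hI₀mem, hmin⟩ := IsArtinian.set_has_minimal
    {I : Ideal Q | ∃ s : Finset (Ideal Q), (∀ m ∈ s, m.IsMaximal) ∧ I = s.inf id}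
    ⟨⊤, ∅, by simp, by simp⟩
  obtain ⟨s, hs, rfl⟩ := hI₀mem
  have hle : ∀ m : Ideal Q, m.IsMaximal → s.inf id ≤ m := by
    intro m hm
    have hmem : s.inf id ⊓ m ∈
        {I : Ideal Q | ∃ t : Finset (Ideal Q), (∀ m' ∈ t, m'.IsMaximal) ∧ I = t.inf id} := by
      refine ⟨insert m s, ?_, ?_⟩
      · intro m' hm'
        rcases Finset.mem_insert.mp hm' with h | h
        · exact h ▸ hm
        · exact hs m' h
      · rw [Finset.inf_insert]; exact (inf_comm _ _)
    have hnotlt := hmin _ hmem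
    have heq : s.inf id ⊓ m = s.inf id := by
      rcases lt_or_eq_of_le (inf_le_left : s.inf id ⊓ m ≤ s.inf id) with h | h
      · exact absurd h hnotlt
      · exact h
    exact inf_eq_left.mp heq
  have hbot : s.inf id = ⊥ := by
    have h1 : s.inf id ≤ Ideal.jacobson (⊥ : Ideal Q) := by
      rw [Ideal.jacobson]
      exact le_sInf fun J hJ' => hle J hJ'.2
    rw [hJ] at h1
    exact le_bot_iff.mp h1
  set f : Q →ₗ[Q] (∀ m : {x // x ∈ s}, Q ⧸ (m : Ideal Q)) :=
    LinearMap.pi (fun m => Submodule.mkQ (m : Ideal Q)) with hf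
  have hker : LinearMap.ker f = ⊥ := by
    rw [hf, LinearMap.ker_pi]
    simp only [Submodule.ker_mkQ]
    have heq : (⨅ m : {x // x ∈ s}, (m : Ideal Q)) = s.inf id := by
      apply le_antisymm
      · exact Finset.le_inf fun m hm => iInf_le_of_le ⟨m, hm⟩ (le_refl _)
      · exact le_iInf fun m => Finset.inf_le m.2
    rw [heq, hbot]
  haveI hsimp : ∀ m : {x // x ∈ s}, IsSimpleModule Q (Q ⧸ (m : Ideal Q)) := fun m =>
    isSimpleModule_iff_isCoatom.mpr (Ideal.isMaximal_def.mp (hs _ m.2))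
  haveI : IsSemisimpleModule Q (∀ m : {x // x ∈ s}, Q ⧸ (m : Ideal Q)) :=
    aux_pi_semisimple _
  exact IsSemisimpleModule.congr (M := ↥(LinearMap.range f))
    (LinearEquiv.ofInjective f (LinearMap.ker_eq_bot.mp hker))

/-- Transfer semisimplicity along a surjective ring hom compatible with two module
structures. -/
lemma aux_semisimple_of_surj {R' S' M : Type u} [Ring R'] [Ring S'] [AddCommGroup M]
    [Module R' M] [Module S' M] (φ : R' →+* S') (hφ : Function.Surjective φ)
    (hc : ∀ (r : R') (m : M), r • m = φ r • m) [IsSemisimpleModule S' M] :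
    IsSemisimpleModule R' M := by
  refine { toComplementedLattice := ⟨?_⟩ }
  intro N
  let N' : Submodule S' M :=
    { carrier := N
      add_mem' := fun ha hb => N.add_mem ha hb
      zero_mem' := N.zero_mem
      smul_mem' := by
        intro s m hm
        obtain ⟨r, rfl⟩ := hφ s
        rw [← hc]
        exact N.smul_mem r hm }
  obtain ⟨C', hC⟩ := exists_isCompl N'
  let C : Submodule R' M :=
    { carrier := C'
      add_mem' := fun ha hb => C'.add_mem ha hb
      zero_mem' := C'.zero_mem
      smul_mem' := by
        intro r m hm
        rw [hc]
        exact C'.smul_mem _ hm }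
  refine ⟨C, isCompl_iff.mpr ⟨?_, ?_⟩⟩
  · rw [Submodule.disjoint_def]
    intro x hxN hxC
    exact (Submodule.disjoint_def.mp hC.disjoint) x hxN hxC
  · rw [codisjoint_iff, Submodule.eq_top_iff']
    intro x
    have : x ∈ N' ⊔ C' := by rw [codisjoint_iff.mp hC.codisjoint]; trivial
    obtain ⟨y, hy, z, hz, hyz⟩ := Submodule.mem_sup.mp this
    exact Submodule.mem_sup.mpr ⟨y, hy, z, hz, hyz⟩

end Aux


section Cover

variable (A : Type u) [Ring A]

lemma sqMk_surjective : Function.Surjective (sqMk A) :=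
  fun q => Quotient.inductionOn q fun a => ⟨a, rfl⟩

lemma sqMk_eq_zero {x : A} : sqMk A x = 0 ↔ x ∈ radT A := by
  have h0 : (0 : Sq A) = sqMk A 0 := (map_zero _).symm
  rw [h0, TwoSidedIdeal.mem_iff]
  exact RingCon.eq _

lemma asIdeal_bot : TwoSidedIdeal.asIdeal (⊥ : TwoSidedIdeal A) = ⊥ := by
  ext x
  rw [TwoSidedIdeal.mem_asIdeal, Ideal.mem_bot, TwoSidedIdeal.mem_bot]

lemma mem_radT_iff {x : A} : x ∈ radT A ↔ x ∈ Ideal.jacobson (⊥ : Ideal A) := by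
  rw [← TwoSidedIdeal.mem_asIdeal, radT, TwoSidedIdeal.asIdeal_jacobson, asIdeal_bot]

lemma isUnit_one_sub_radT {x : A} (hx : x ∈ radT A) : IsUnit (1 - x) :=
  aux_isUnit_one_sub ((mem_radT_iff A).mp hx)

lemma sq_unit_lift {u : A} (h : IsUnit (sqMk A u)) : IsUnit u := by
  obtain ⟨U, hU⟩ := h
  obtain ⟨v, hv⟩ := sqMk_surjective A (↑U⁻¹ : Sq A)
  have huv : sqMk A (u * v) = 1 := by rw [map_mul, ← hU, hv]; exact U.mul_inv
  have hvu : sqMk A (v * u) = 1 := by rw [map_mul, hv, ← hU]; exact U.inv_mul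
  have memuv : u * v - 1 ∈ radT A := by
    rw [← sqMk_eq_zero, map_sub, huv, map_one, sub_self]
  have memvu : v * u - 1 ∈ radT A := by
    rw [← sqMk_eq_zero, map_sub, hvu, map_one, sub_self]
  have huv' : IsUnit (u * v) := by
    have := aux_isUnit_one_sub ((mem_radT_iff A).mp (neg_mem memuv))
    rwa [sub_neg_eq_add, add_sub_cancel] at this
  have hvu' : IsUnit (v * u) := by
    have := aux_isUnit_one_sub ((mem_radT_iff A).mp (neg_mem memvu))
    rwa [sub_neg_eq_add, add_sub_cancel] at this
  obtain ⟨W, hW⟩ := huv'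
  obtain ⟨V, hV⟩ := hvu'
  refine aux_isUnit_of_left_right (v := v * ↑W⁻¹) (w := ↑V⁻¹ * v) ?_ ?_
  · calc u * (v * ↑W⁻¹) = (u * v) * ↑W⁻¹ := by rw [mul_assoc]
    _ = 1 := by rw [← hW]; exact W.mul_inv
  · calc (↑V⁻¹ * v) * u = ↑V⁻¹ * (v * u) := by rw [mul_assoc]
    _ = 1 := by rw [← hV]; exact V.inv_mul

lemma jac_sq_op_bot : Ideal.jacobson (⊥ : Ideal (Sq A)ᵐᵒᵖ) = ⊥ := by
  rw [eq_bot_iff]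
  intro ζ hζ
  obtain ⟨a, ha⟩ := sqMk_surjective A (unop ζ)
  have key : ∀ y : A, IsUnit (1 + y * a) := by
    intro y
    have h1 : IsUnit (1 + unop ζ * sqMk A y) := by
      have hop := aux_forall_of_mem_jacobson hζ (op (sqMk A y))
      have h2 : unop (1 + op (sqMk A y) * ζ) = 1 + unop ζ * sqMk A y := by simp
      rw [← h2]
      exact hop.unop
    have h3 : IsUnit (1 + sqMk A y * unop ζ) := aux_isUnit_one_add_swap h1
    rw [← ha] at h3
    have h4 : (1 + sqMk A y * sqMk A a) = sqMk A (1 + y * a) := by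
      rw [map_add, map_one, map_mul]
    rw [h4] at h3
    exact sq_unit_lift A h3
  have hmem : a ∈ radT A := (mem_radT_iff A).mpr (aux_mem_jacobson_of_forall key)
  have h0 : unop ζ = 0 := by rw [← ha]; exact (sqMk_eq_zero A).mpr hmem
  rw [Ideal.mem_bot]
  exact unop_injective h0

end Cover





section Semisimple

variable (k : Type u) [CommRing k] [IsArtinianRing k]
variable (A : Type u) [Ring A] [Algebra k A] [Module.Finite k A]

include k

lemma sq_op_semisimple : IsSemisimpleRing (Sq A)ᵐᵒᵖ := by
  letI alg : Algebra k (Sq A) := RingHom.toAlgebra' ((sqMk A).comp (algebraMap k A)) (by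
    intro c x
    obtain ⟨a, rfl⟩ := sqMk_surjective A x
    rw [RingHom.comp_apply, ← map_mul, ← map_mul, Algebra.commutes])
  have halgmap : ∀ c : k, algebraMap k (Sq A) c = sqMk A (algebraMap k A c) := fun _ => rfl
  letI : Module.Finite k (Sq A) := by
    refine Module.Finite.of_surjective (M := A) (σ := RingHom.id k)
      { toFun := sqMk A
        map_add' := map_add _
        map_smul' := ?_ } (sqMk_surjective A)
    intro c a
    simp only [RingHom.id_apply]
    rw [Algebra.smul_def, Algebra.smul_def, halgmap, map_mul]
  letI : Module.Finite k (Sq A)ᵐᵒᵖ := Module.Finite.equiv (MulOpposite.opLinearEquiv k)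
  haveI : IsArtinian k (Sq A)ᵐᵒᵖ := isArtinian_of_fg_of_artinian'
  haveI : IsArtinian (Sq A)ᵐᵒᵖ (Sq A)ᵐᵒᵖ := isArtinian_of_tower k inferInstance
  exact aux_semisimple_of_artinian (jac_sq_op_bot A)

lemma w_op_semisimple : IsSemisimpleRing (Sq A × Sq A)ᵐᵒᵖ := by
  haveI := sq_op_semisimple k A
  letI e : (Sq A × Sq A)ᵐᵒᵖ ≃+* (Sq A)ᵐᵒᵖ × (Sq A)ᵐᵒᵖ :=
    { toFun := fun x => (op (unop x).1, op (unop x).2)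
      invFun := fun p => op (unop p.1, unop p.2)
      left_inv := fun _ => rfl
      right_inv := fun _ => rfl
      map_add' := fun _ _ => rfl
      map_mul' := fun _ _ => rfl }
  exact e.symm.isSemisimpleRing

end Semisimple

section PiW

variable (A : Type u) [Ring A]

/-- The projection `Ã → A × B`. -/
noncomputable def covFst : Cov A →+* A × BB A where
  toFun := TrivSqZeroExt.fst
  map_one' := TrivSqZeroExt.fst_one (R := A × BB A) (M := MC A)
  map_mul' x y := TrivSqZeroExt.fst_mul x y
  map_zero' := TrivSqZeroExt.fst_zero (R := A × BB A) (M := MC A)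
  map_add' x y := TrivSqZeroExt.fst_add x y

/-- The projection `Ã → A/rad(A) × A/rad(A)` remembering the `B`-part (first) and the
`A`-part (second). -/
noncomputable def piW : Cov A →+* Sq A × Sq A :=
  (((bbFst A).comp (RingHom.snd A (BB A))).prod ((sqMk A).comp (RingHom.fst A (BB A)))).comp
    (covFst A)

lemma piW_apply (z : Cov A) :
    piW A z = (bbFst A (TrivSqZeroExt.fst z).2, sqMk A (TrivSqZeroExt.fst z).1) := rfl

lemma piW_surjective : Function.Surjective (piW A) := by
  rintro ⟨u, v⟩
  obtain ⟨a, ha⟩ := sqMk_surjective A v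
  refine ⟨TrivSqZeroExt.inl ((a, TrivSqZeroExt.inl u) : A × BB A), ?_⟩
  refine Prod.ext ?_ ?_
  · show bbFst A (TrivSqZeroExt.fst
      (TrivSqZeroExt.inl ((a, TrivSqZeroExt.inl u) : A × BB A) : Cov A)).2 = u
    rw [TrivSqZeroExt.fst_inl]
    show TrivSqZeroExt.fst (TrivSqZeroExt.inl u : BB A) = u
    rw [TrivSqZeroExt.fst_inl]
  · show sqMk A (TrivSqZeroExt.fst
      (TrivSqZeroExt.inl ((a, TrivSqZeroExt.inl u) : A × BB A) : Cov A)).1 = v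
    rw [TrivSqZeroExt.fst_inl]
    exact ha

/-- The canonical copy of `A/rad(A) × A/rad(A)` inside `Ã`: the socle-like right ideal
`(0, soc B; A/rad A, 0)`. -/
noncomputable def iotaC (w : Sq A × Sq A) : Cov A :=
  (((0, ((0, w.1) : BB A)), (w.2 : MC A)) : Cov A)

lemma iotaC_fst (w : Sq A × Sq A) :
    TrivSqZeroExt.fst (iotaC A w) = ((0 : A), ((0, w.1) : BB A)) := rfl

lemma iotaC_snd (w : Sq A × Sq A) : TrivSqZeroExt.snd (iotaC A w) = (w.2 : MC A) := rfl

lemma iotaC_injective : Function.Injective (iotaC A) := by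
  intro w w' h
  have h1 := congrArg TrivSqZeroExt.fst h
  have h2 := congrArg TrivSqZeroExt.snd h
  rw [iotaC_fst, iotaC_fst] at h1
  rw [iotaC_snd, iotaC_snd] at h2
  have h3 := congrArg Prod.snd h1
  have h4 : w.1 = w'.1 := congrArg (TrivSqZeroExt.snd (R := Sq A) (M := Sq A)) h3
  exact Prod.ext h4 h2

lemma iotaC_add (w w' : Sq A × Sq A) : iotaC A (w + w') = iotaC A w + iotaC A w' := by
  refine TrivSqZeroExt.ext ?_ ?_
  · erw [TrivSqZeroExt.fst_add, iotaC_fst, iotaC_fst, iotaC_fst]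
    refine Prod.ext (by rw [Prod.fst_add]; exact (add_zero _).symm) ?_
    erw [Prod.snd_add]
    refine TrivSqZeroExt.ext ?_ ?_
    · erw [TrivSqZeroExt.fst_add]
      exact (add_zero _).symm
    · erw [TrivSqZeroExt.snd_add]
      rfl
  · rfl

lemma piW_iotaC (w : Sq A × Sq A) : piW A (iotaC A w) = 0 := by
  rw [piW_apply, iotaC_fst]
  refine Prod.ext ?_ ?_
  · show bbFst A ((0, w.1) : BB A) = 0
    rfl
  · show sqMk A 0 = 0
    exact map_zero _

lemma iotaC_mul (w : Sq A × Sq A) (y : Cov A) : iotaC A w * y = iotaC A (w * piW A y) := by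
  refine TrivSqZeroExt.ext ?_ ?_
  · erw [TrivSqZeroExt.fst_mul, iotaC_fst, iotaC_fst]
    refine Prod.ext ?_ ?_
    · show (0 : A) * (TrivSqZeroExt.fst y).1 = 0
      exact zero_mul _
    · erw [Prod.snd_mul]
      refine TrivSqZeroExt.ext ?_ ?_
      · erw [TrivSqZeroExt.fst_mul]
        show (0 : Sq A) * TrivSqZeroExt.fst ((TrivSqZeroExt.fst y).2) = 0
        exact zero_mul _
      · erw [TrivSqZeroExt.snd_mul]
        show (0 : Sq A) * TrivSqZeroExt.snd ((TrivSqZeroExt.fst y).2)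
            + w.1 * TrivSqZeroExt.fst ((TrivSqZeroExt.fst y).2)
          = w.1 * bbFst A (TrivSqZeroExt.fst y).2
        rw [zero_mul, zero_add]
        rfl
  · erw [TrivSqZeroExt.snd_mul, iotaC_snd, iotaC_snd]
    show (0 : Sq A) * (TrivSqZeroExt.snd y : Sq A)
        + w.2 * sqMk A (TrivSqZeroExt.fst y).1
      = w.2 * sqMk A (TrivSqZeroExt.fst y).1
    rw [zero_mul, zero_add]

lemma isUnit_one_sub_kerPiW {z : Cov A} (hz : piW A z = 0) : IsUnit ((1 : Cov A) - z) := by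
  have hz1 : bbFst A (TrivSqZeroExt.fst z).2 = 0 := by
    have := congrArg Prod.fst hz
    simpa [piW_apply] using this
  have hz2 : sqMk A (TrivSqZeroExt.fst z).1 = 0 := by
    have := congrArg Prod.snd hz
    simpa [piW_apply] using this
  erw [TrivSqZeroExt.isUnit_iff_isUnit_fst, TrivSqZeroExt.fst_sub, TrivSqZeroExt.fst_one]
  apply aux_prod_isUnit
  · show IsUnit ((1 : A) - (TrivSqZeroExt.fst z).1)
    exact isUnit_one_sub_radT A ((sqMk_eq_zero A).mp hz2)
  · show IsUnit ((1 : BB A) - (TrivSqZeroExt.fst z).2)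
    erw [TrivSqZeroExt.isUnit_iff_isUnit_fst, TrivSqZeroExt.fst_sub, TrivSqZeroExt.fst_one]
    have : TrivSqZeroExt.fst ((TrivSqZeroExt.fst z).2) = bbFst A ((TrivSqZeroExt.fst z).2) := rfl
    rw [this, hz1, sub_zero]
    exact isUnit_one

lemma smul_eq_zero_of_kerPiW {S : Type u} [AddCommGroup S] [Module (Cov A)ᵐᵒᵖ S]
    [IsSimpleModule (Cov A)ᵐᵒᵖ S] {z : Cov A} (hz : piW A z = 0) (s : S) : op z • s = 0 := by
  by_contra hne
  have hspan : Submodule.span (Cov A)ᵐᵒᵖ {op z • s} = ⊤ := by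
    rcases eq_bot_or_eq_top (Submodule.span (Cov A)ᵐᵒᵖ {op z • s}) with h | h
    · exact absurd (h ▸ Submodule.mem_span_singleton_self (op z • s)) (by
        rw [Submodule.mem_bot]; exact hne)
    · exact h
  have hs : s ∈ Submodule.span (Cov A)ᵐᵒᵖ {op z • s} := hspan ▸ Submodule.mem_top
  obtain ⟨r, hr⟩ := Submodule.mem_span_singleton.mp hs
  have hzy : piW A (z * unop r) = 0 := by rw [map_mul, hz, zero_mul]
  obtain ⟨U, hU⟩ := isUnit_one_sub_kerPiW A hzy
  have h1 : op ((1 : Cov A) - z * unop r) • s = 0 := by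
    have hop : (op ((1 : Cov A) - z * unop r)) = 1 - op (z * unop r) := by simp
    rw [hop, sub_smul, one_smul]
    have h2 : op (z * unop r) • s = r • (op z • s) := by
      rw [MulOpposite.op_mul, MulOpposite.op_unop, mul_smul]
    rw [h2, hr, sub_self]
  have hs0 : s = 0 := by
    calc s = ((op (↑U⁻¹ : Cov A) * op (↑U : Cov A)) : (Cov A)ᵐᵒᵖ) • s := by
          rw [← MulOpposite.op_mul, Units.mul_inv, MulOpposite.op_one, one_smul]
    _ = op (↑U⁻¹ : Cov A) • (op (↑U : Cov A) • s) := by rw [mul_smul]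
    _ = 0 := by rw [hU, h1, smul_zero]
  exact hne (by rw [hs0, smul_zero])

end PiW


section Embed

variable (k : Type u) [CommRing k] [IsArtinianRing k]
variable (A : Type u) [Ring A] [Algebra k A] [Module.Finite k A]

include k

theorem cov_embed (S : Type u) [AddCommGroup S] [Module (Cov A)ᵐᵒᵖ S]
    [IsSimpleModule (Cov A)ᵐᵒᵖ S] :
    ∃ f : S →ₗ[(Cov A)ᵐᵒᵖ] Cov A, Function.Injective f ∧ ∀ s, piW A (f s) = 0 := by
  classical
  letI modW : Module (Cov A)ᵐᵒᵖ (Sq A × Sq A) :=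
    Module.compHom (Sq A × Sq A) (RingHom.op (piW A))
  have smulW : ∀ (r : (Cov A)ᵐᵒᵖ) (v : Sq A × Sq A), r • v = v * piW A (unop r) :=
    fun r v => rfl
  haveI hWss : IsSemisimpleRing (Sq A × Sq A)ᵐᵒᵖ := w_op_semisimple k A
  haveI hWs : IsSemisimpleModule (Cov A)ᵐᵒᵖ (Sq A × Sq A) := by
    refine aux_semisimple_of_surj (RingHom.op (piW A)) ?_ (fun r m => rfl)
    intro v
    obtain ⟨y, hy⟩ := piW_surjective A (unop v)
    exact ⟨op y, by rw [show (RingHom.op (piW A)) (op y) = op (piW A y) from rfl, hy, op_unop]⟩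
  haveI : Nontrivial S := IsSimpleModule.nontrivial (Cov A)ᵐᵒᵖ S
  obtain ⟨s₀, hs₀⟩ := exists_ne (0 : S)
  set sec : Sq A × Sq A → Cov A := Function.surjInv (piW_surjective A) with hsecdef
  have hsec : ∀ v, piW A (sec v) = v := fun v => Function.surjInv_eq (piW_surjective A) v
  have key : ∀ (x : Cov A) (v : Sq A × Sq A), piW A x = v →
      (op (sec v) : (Cov A)ᵐᵒᵖ) • s₀ = op x • s₀ := by
    intro x v hv
    have h0 : piW A (sec v - x) = 0 := by rw [map_sub, hsec, hv, sub_self]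
    have h1 := smul_eq_zero_of_kerPiW A h0 s₀
    have hop : (op (sec v - x) : (Cov A)ᵐᵒᵖ) = op (sec v) - op x := by simp
    rw [hop, sub_smul] at h1
    exact sub_eq_zero.mp h1
  set gbar : (Sq A × Sq A) →ₗ[(Cov A)ᵐᵒᵖ] S :=
    { toFun := fun v => (op (sec v) : (Cov A)ᵐᵒᵖ) • s₀
      map_add' := by
        intro v v'
        show (op (sec (v + v')) : (Cov A)ᵐᵒᵖ) • s₀
          = (op (sec v) : (Cov A)ᵐᵒᵖ) • s₀ + (op (sec v') : (Cov A)ᵐᵒᵖ) • s₀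
        rw [key (sec v + sec v') (v + v') (by rw [map_add, hsec, hsec])]
        have h2 : (op (sec v + sec v') : (Cov A)ᵐᵒᵖ) = op (sec v) + op (sec v') := by simp
        rw [h2, add_smul]
      map_smul' := by
        intro r v
        show (op (sec (r • v)) : (Cov A)ᵐᵒᵖ) • s₀ = r • ((op (sec v) : (Cov A)ᵐᵒᵖ) • s₀)
        have h1 : piW A (sec v * unop r) = r • v := by
          rw [map_mul, hsec]; exact (smulW r v).symm
        rw [key (sec v * unop r) (r • v) h1]
        rw [MulOpposite.op_mul, MulOpposite.op_unop, mul_smul] } with hgbar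
  have hgsurj : Function.Surjective gbar := by
    intro s
    have hspan : Submodule.span (Cov A)ᵐᵒᵖ {s₀} = ⊤ := by
      rcases eq_bot_or_eq_top (Submodule.span (Cov A)ᵐᵒᵖ {s₀}) with h | h
      · exact absurd (h ▸ Submodule.mem_span_singleton_self s₀) (by
          rw [Submodule.mem_bot]; exact hs₀)
      · exact h
    have hmem : s ∈ Submodule.span (Cov A)ᵐᵒᵖ {s₀} := hspan ▸ Submodule.mem_top
    obtain ⟨r, hr⟩ := Submodule.mem_span_singleton.mp hmem
    refine ⟨piW A (unop r), ?_⟩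
    show (op (sec (piW A (unop r))) : (Cov A)ᵐᵒᵖ) • s₀ = s
    rw [key (unop r) _ rfl, op_unop, hr]
  obtain ⟨C, hC⟩ := exists_isCompl (LinearMap.ker gbar)
  set g' : C →ₗ[(Cov A)ᵐᵒᵖ] S := gbar.comp C.subtype with hg'
  have hg'inj : Function.Injective g' := by
    rw [← LinearMap.ker_eq_bot, eq_bot_iff]
    rintro ⟨x, hxC⟩ hx
    have hxk : x ∈ LinearMap.ker gbar := hx
    have h0 := Submodule.disjoint_def.mp hC.disjoint x hxk hxC
    exact (Submodule.mem_bot _).mpr (Subtype.ext h0)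
  have hg'surj : Function.Surjective g' := by
    intro s
    obtain ⟨v, hv⟩ := hgsurj s
    have hmem : v ∈ LinearMap.ker gbar ⊔ C := by
      rw [codisjoint_iff.mp hC.codisjoint]; trivial
    obtain ⟨n, hn, c, hcC, hsum⟩ := Submodule.mem_sup.mp hmem
    refine ⟨⟨c, hcC⟩, ?_⟩
    show gbar c = s
    have h2 : gbar v = gbar n + gbar c := by rw [← hsum, map_add]
    rw [← hv, h2, LinearMap.mem_ker.mp hn, zero_add]
  set eqv := LinearEquiv.ofBijective g' ⟨hg'inj, hg'surj⟩ with heqv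
  set iotaL : (Sq A × Sq A) →ₗ[(Cov A)ᵐᵒᵖ] Cov A :=
    { toFun := iotaC A
      map_add' := iotaC_add A
      map_smul' := by
        intro r v
        simp only [RingHom.id_apply]
        rw [smulW, ← iotaC_mul]
        rfl } with hiotaL
  refine ⟨iotaL.comp ((C.subtype).comp (eqv.symm.toLinearMap : S →ₗ[(Cov A)ᵐᵒᵖ] C)), ?_, ?_⟩
  · have h1 : Function.Injective iotaL := iotaC_injective A
    have h2 : Function.Injective C.subtype := Submodule.injective_subtype C
    simp only [LinearMap.coe_comp]
    exact h1.comp (h2.comp eqv.symm.injective)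
  · intro s
    simp only [LinearMap.coe_comp, Function.comp_apply]
    exact piW_iotaC A _

end Embed


section Main

variable (k : Type u) [CommRing k] [IsArtinianRing k]
variable (A : Type u) [Ring A] [Algebra k A] [Module.Finite k A]

include k

theorem cov_delLevel (S : ModuleCat.{u} (Cov A)ᵐᵒᵖ) (hS : IsSimpleModule (Cov A)ᵐᵒᵖ S) :
    delLevel (Cov A)ᵐᵒᵖ S = 0 := by
  haveI := hS
  obtain ⟨f, hfinj, hf0⟩ := cov_embed k A S
  letI oe : (Cov A)ᵐᵒᵖ ≃ₗ[(Cov A)ᵐᵒᵖ] Cov A :=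
    { toFun := unop
      invFun := op
      left_inv := fun _ => rfl
      right_inv := fun _ => rfl
      map_add' := fun _ _ => rfl
      map_smul' := fun _ _ => rfl }
  haveI hProjCov : Module.Projective (Cov A)ᵐᵒᵖ (Cov A) := Module.Projective.of_equiv oe
  haveI hFinCov : Module.Finite (Cov A)ᵐᵒᵖ (Cov A) := Module.Finite.equiv oe
  set N : Submodule (Cov A)ᵐᵒᵖ (Cov A) := LinearMap.range f with hN
  set Mq : ModuleCat.{u} (Cov A)ᵐᵒᵖ := ModuleCat.of (Cov A)ᵐᵒᵖ ((Cov A) ⧸ N) with hMq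
  set Pm : ModuleCat.{u} (Cov A)ᵐᵒᵖ := ModuleCat.of (Cov A)ᵐᵒᵖ (Cov A) with hPm
  set fmor : Pm ⟶ Mq := ModuleCat.ofHom N.mkQ with hfmor
  haveI hFinMq : Module.Finite (Cov A)ᵐᵒᵖ Mq :=
    Module.Finite.of_surjective N.mkQ (Submodule.mkQ_surjective N)
  have hPC : IsProjCover (Cov A)ᵐᵒᵖ fmor.hom := by
    refine ⟨hProjCov, Submodule.mkQ_surjective N, ?_⟩
    intro N' hsup
    have hker : LinearMap.ker fmor.hom = N := Submodule.ker_mkQ N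
    rw [hker] at hsup
    have h1 : (1 : Cov A) ∈ N' ⊔ N := by rw [hsup]; trivial
    obtain ⟨n, hn, x, hx, hsum⟩ := Submodule.mem_sup.mp h1
    obtain ⟨s, rfl⟩ := hx
    obtain ⟨U, hU⟩ := isUnit_one_sub_kerPiW A (hf0 s)
    have hnU : n = (↑U : Cov A) := by
      rw [hU]
      have h2 : n = n + f s - f s := (add_sub_cancel_right n (f s)).symm
      rw [h2, hsum]
    rw [Submodule.eq_top_iff']
    intro y
    have hy : (show Cov A from y) = op ((↑U⁻¹ : Cov A) * (show Cov A from y)) • n := by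
      show (show Cov A from y) = n * ((↑U⁻¹ : Cov A) * (show Cov A from y))
      rw [hnU, ← mul_assoc, U.mul_inv, one_mul]
    have hz := N'.smul_mem (op ((↑U⁻¹ : Cov A) * (show Cov A from y))) hn
    rw [← hy] at hz
    exact hz
  set Tm : ModuleCat.{u} (Cov A)ᵐᵒᵖ :=
    ModuleCat.of (Cov A)ᵐᵒᵖ (LinearMap.ker fmor.hom) with hTm
  have hsyz1 : IsSyzygy (Cov A)ᵐᵒᵖ (0 + 1) Mq Tm := IsSyzygy.succ fmor hPC (IsSyzygy.zero _)
  have hkereq : N = LinearMap.ker fmor.hom := (Submodule.ker_mkQ N).symm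
  set e1 : S ≃ₗ[(Cov A)ᵐᵒᵖ] N := LinearEquiv.ofInjective f hfinj with he1
  set e2 : N ≃ₗ[(Cov A)ᵐᵒᵖ] (LinearMap.ker fmor.hom) :=
    LinearEquiv.ofEq _ _ hkereq with he2
  have hsummand : IsDirectSummandOf (Cov A)ᵐᵒᵖ S (Pm × Tm) := by
    refine ⟨LinearMap.prod 0 (e2.toLinearMap.comp e1.toLinearMap),
      (e1.symm.toLinearMap.comp e2.symm.toLinearMap).comp
        (LinearMap.snd (Cov A)ᵐᵒᵖ Pm Tm), ?_⟩
    refine LinearMap.ext fun s => ?_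
    show e1.symm (e2.symm (e2 (e1 s))) = s
    rw [LinearEquiv.symm_apply_apply, LinearEquiv.symm_apply_apply]
  have hmem : (0 : ℕ∞) ∈ {e : ℕ∞ | ∃ d : ℕ, e = (d : ℕ∞) ∧
      ∃ M P S' T : ModuleCat.{u} (Cov A)ᵐᵒᵖ, Module.Finite (Cov A)ᵐᵒᵖ M ∧
        Module.Projective (Cov A)ᵐᵒᵖ P ∧ Module.Finite (Cov A)ᵐᵒᵖ P ∧
        IsSyzygy (Cov A)ᵐᵒᵖ d S S' ∧ IsSyzygy (Cov A)ᵐᵒᵖ (d + 1) M T ∧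
        IsDirectSummandOf (Cov A)ᵐᵒᵖ S' (P × T)} := by
    refine ⟨0, by norm_num, Mq, Pm, S, Tm, hFinMq, hProjCov, hFinCov,
      IsSyzygy.zero S, hsyz1, hsummand⟩
  exact le_antisymm (sInf_le hmem) bot_le

end Main


/-- With `Ã` the cover `(A, 0; A/rad(A), B)` of an Artin algebra `A`
(where `B = T(A/rad(A))`), every simple right `Ã`-module embeds into the regular module
`Ã`; consequently the delooping level of `Ã` is `0`. -/
theorem stmt_4 (k : Type u) [CommRing k] [IsArtinianRing k]
    (A : Type u) [Ring A] [Algebra k A] [Module.Finite k A] :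
    (∀ S : ModuleCat.{u} (Cov A)ᵐᵒᵖ, IsSimpleModule (Cov A)ᵐᵒᵖ S →
      ∃ f : S →ₗ[(Cov A)ᵐᵒᵖ] (Cov A), Function.Injective f) ∧
    delAlgRight (Cov A) = 0 := by
  constructor
  · intro S hS
    haveI := hS
    obtain ⟨f, hf, -⟩ := cov_embed k A S
    exact ⟨f, hf⟩
  · unfold delAlgRight delAlg
    apply le_antisymm
    · apply iSup_le
      intro S
      apply iSup_le
      intro hS
      rw [cov_delLevel k A S hS]
    · exact bot_le
end

section
/- Let Λ = (A, M; 0, B) be a triangular matrix Artin algebra with M = A/rad(A) as A-B-bimodule and B = T(A/rad(A)). If 0 → (K, L, h) → (U, V, g) → (X, Y, f) → 0 is an exact sequence of right Λ-modules in which (U, V, g) → (X, Y, f) is a projective cover, then the induced sequence 0 → K → U → X → 0 of right A-modules is exact and U → X is a projective cover of X; in particular K ≅ Ω(X) as A-modules. -/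
open CategoryTheory MulOpposite

universe u

section Triples

variable (A : Type u) [Ring A]

/-- The projection `Λ → A`. -/
noncomputable def lamToA : Lam A →+* A := (RingHom.fst A (BB A)).comp (lamFst A)

/-- The projection `Λ → B`. -/
noncomputable def lamToB : Lam A →+* BB A := (RingHom.snd A (BB A)).comp (lamFst A)

/-- A right `A`-module, viewed as the right `Λ`-module `(X, 0, 0)` via `Λ → A`. -/
noncomputable def lamModOfA (X : Type u) [AddCommGroup X] [Module Aᵐᵒᵖ X] :
    Module (Lam A)ᵐᵒᵖ X :=
  Module.compHom X (RingHom.op (lamToA A))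

/-- A right `B`-module, viewed as the right `Λ`-module `(0, Y, 0)` via `Λ → B`. -/
noncomputable def lamModOfB (Y : Type u) [AddCommGroup Y] [Module (BB A)ᵐᵒᵖ Y] :
    Module (Lam A)ᵐᵒᵖ Y :=
  Module.compHom Y (RingHom.op (lamToB A))

/-- The data of a right `Λ`-module triple `(X, Y, f)`: a right `A`-module `X`, a right
`B`-module `Y`, and a biadditive, `A`-balanced, right `B`-linear pairing
`f : X → A/rad(A) → Y`, corresponding to a homomorphism `X ⊗_A M → Y` of right
`B`-modules. -/
structure TripleMap (X Y : Type u) [AddCommGroup X] [Module Aᵐᵒᵖ X]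
    [AddCommGroup Y] [Module (BB A)ᵐᵒᵖ Y] where
  f : X → Sq A → Y
  addl : ∀ x x' m, f (x + x') m = f x m + f x' m
  addr : ∀ x m m', f x (m + m') = f x m + f x m'
  bal : ∀ (x : X) (a : A) (m : Sq A), f (op a • x) m = f x (sqMk A a * m)
  linr : ∀ (x : X) (m : Sq A) (b : BB A), f x (m * bbFst A b) = op b • f x m

namespace TripleMap

variable {A} {X Y : Type u} [AddCommGroup X] [Module Aᵐᵒᵖ X]
  [AddCommGroup Y] [Module (BB A)ᵐᵒᵖ Y] (t : TripleMap A X Y)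

theorem f_zero_left (m : Sq A) : t.f 0 m = 0 := by
  have h := t.addl 0 0 m
  rw [add_zero] at h
  exact (left_eq_add.mp h)

theorem f_zero_right (x : X) : t.f x 0 = 0 := by
  have h := t.addr x 0 0
  rw [add_zero] at h
  exact (left_eq_add.mp h)

/-- The right `Λ`-module structure on `X × Y` determined by the triple `(X, Y, f)`:
`(x, y)·((a, b), m) = (x·a, y·b + f(x ⊗ m))`. -/
noncomputable def module : Module (Lam A)ᵐᵒᵖ (X × Y) :=
  letI : SMul (Lam A)ᵐᵒᵖ (X × Y) :=
    ⟨fun l p => (op (unop l).fst.1 • p.1,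
      op (unop l).fst.2 • p.2 + t.f p.1 ((unop l).snd : Sq A))⟩
  { smul := fun l p => l • p
    one_smul := fun p => by
      apply Prod.ext
      · show op ((1 : Lam A).fst.1) • p.1 = p.1
        erw [TrivSqZeroExt.fst_one]
        show op (1 : A) • p.1 = p.1
        erw [op_one, one_smul]
      · show op ((1 : Lam A).fst.2) • p.2 + t.f p.1 ((1 : Lam A).snd : Sq A) = p.2
        erw [TrivSqZeroExt.fst_one, TrivSqZeroExt.snd_one]
        show op (1 : BB A) • p.2 + t.f p.1 (0 : Sq A) = p.2
        erw [op_one, one_smul, t.f_zero_right, add_zero]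
    mul_smul := fun r s p => by
      apply Prod.ext
      · show op ((unop s * unop r).fst.1) • p.1
            = op ((unop r).fst.1) • (op ((unop s).fst.1) • p.1)
        erw [TrivSqZeroExt.fst_mul]; erw [Prod.fst_mul, op_mul, mul_smul]
      · show op ((unop s * unop r).fst.2) • p.2 + t.f p.1 ((unop s * unop r).snd : Sq A)
            = op ((unop r).fst.2) •
                (op ((unop s).fst.2) • p.2 + t.f p.1 ((unop s).snd : Sq A))
              + t.f (op ((unop s).fst.1) • p.1) ((unop r).snd : Sq A)
        erw [TrivSqZeroExt.fst_mul, TrivSqZeroExt.snd_mul]; erw [Prod.snd_mul, op_mul, mul_smul]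
        erw [t.addr]
        have hbal : t.f p.1 ((unop s).fst • (unop r).snd)
            = t.f (op ((unop s).fst.1) • p.1) ((unop r).snd) :=
          (t.bal p.1 ((unop s).fst.1) ((unop r).snd)).symm
        have hlin : t.f p.1 (op ((unop r).fst) • (unop s).snd)
            = op ((unop r).fst.2) • t.f p.1 ((unop s).snd) :=
          t.linr p.1 ((unop s).snd) ((unop r).fst.2)
        erw [hbal, hlin, smul_add]
        abel
    smul_zero := fun l => by
      apply Prod.ext
      · show op ((unop l).fst.1) • (0 : X) = 0
        erw [smul_zero]
      · show op ((unop l).fst.2) • (0 : Y) + t.f 0 ((unop l).snd : Sq A) = 0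
        erw [smul_zero, t.f_zero_left, add_zero]
    smul_add := fun l p q => by
      apply Prod.ext
      · show op ((unop l).fst.1) • (p.1 + q.1) = _
        erw [smul_add]; rfl
      · show op ((unop l).fst.2) • (p.2 + q.2) + t.f (p.1 + q.1) ((unop l).snd : Sq A)
            = (op ((unop l).fst.2) • p.2 + t.f p.1 ((unop l).snd : Sq A))
              + (op ((unop l).fst.2) • q.2 + t.f q.1 ((unop l).snd : Sq A))
        erw [smul_add, t.addl]
        abel
    add_smul := fun r s p => by
      apply Prod.ext
      · show op ((unop r + unop s).fst.1) • p.1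
            = op ((unop r).fst.1) • p.1 + op ((unop s).fst.1) • p.1
        erw [TrivSqZeroExt.fst_add, Prod.fst_add, MulOpposite.op_add, add_smul]
      · show op ((unop r + unop s).fst.2) • p.2 + t.f p.1 ((unop r + unop s).snd : Sq A)
            = (op ((unop r).fst.2) • p.2 + t.f p.1 ((unop r).snd : Sq A))
              + (op ((unop s).fst.2) • p.2 + t.f p.1 ((unop s).snd : Sq A))
        erw [TrivSqZeroExt.fst_add, TrivSqZeroExt.snd_add, Prod.snd_add, MulOpposite.op_add, add_smul]
        show _ + t.f p.1 (((unop r).snd : Sq A) + ((unop s).snd : Sq A)) = _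
        erw [t.addr]
        abel
    zero_smul := fun p => by
      apply Prod.ext
      · show op ((0 : Lam A).fst.1) • p.1 = 0
        erw [TrivSqZeroExt.fst_zero]
        show op ((0 : A × BB A).1) • p.1 = 0
        erw [Prod.fst_zero, op_zero, zero_smul]
      · show op ((0 : Lam A).fst.2) • p.2 + t.f p.1 ((0 : Lam A).snd : Sq A) = 0
        erw [TrivSqZeroExt.fst_zero, TrivSqZeroExt.snd_zero]
        show op ((0 : A × BB A).2) • p.2 + t.f p.1 ((0 : MM A) : Sq A) = 0
        erw [Prod.snd_zero, op_zero, zero_smul]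
        show (0 : Y) + t.f p.1 (0 : Sq A) = 0
        erw [t.f_zero_right, add_zero] }

end TripleMap

end Triples

/-- The idempotent `e = diag(1,0)` in `Λ`. -/
noncomputable def eE (A : Type u) [Ring A] : Lam A :=
  TrivSqZeroExt.inl ((1 : A), (0 : BB A))

/-- The embedding `A → Λ`, `a ↦ diag(a,0)` (not unital, just a function). -/
noncomputable def iE (A : Type u) [Ring A] (a : A) : Lam A :=
  TrivSqZeroExt.inl ((a : A), (0 : BB A))

/-- Let `Λ = (A, M; 0, B)` with `M = A/rad(A)` and `B = T(A/rad(A))`.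
If `0 → (K,L,h) → (U,V,g) → (X,Y,f) → 0` is an exact sequence of right `Λ`-modules in
which `(U,V,g) → (X,Y,f)` is a projective cover, then the induced sequence
`0 → K → U → X → 0` of right `A`-modules is exact, `U → X` is a projective cover of
`X`, and in particular `K ≅ Ω(X)`. -/
theorem stmt_7 (k : Type u) [CommRing k] [IsArtinianRing k]
    (A : Type u) [Ring A] [Algebra k A] [Module.Finite k A]
    (K U X L V Y : Type u)
    [AddCommGroup K] [Module Aᵐᵒᵖ K] [AddCommGroup U] [Module Aᵐᵒᵖ U]
    [AddCommGroup X] [Module Aᵐᵒᵖ X]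
    [AddCommGroup L] [Module (BB A)ᵐᵒᵖ L] [AddCommGroup V] [Module (BB A)ᵐᵒᵖ V]
    [AddCommGroup Y] [Module (BB A)ᵐᵒᵖ Y]
    [Module.Finite Aᵐᵒᵖ K] [Module.Finite Aᵐᵒᵖ U] [Module.Finite Aᵐᵒᵖ X]
    [Module.Finite (BB A)ᵐᵒᵖ L] [Module.Finite (BB A)ᵐᵒᵖ V] [Module.Finite (BB A)ᵐᵒᵖ Y]
    (th : TripleMap A K L) (tg : TripleMap A U V) (tf : TripleMap A X Y) :
    letI := th.module
    letI := tg.module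
    letI := tf.module
    ∀ (φ : (K × L) →ₗ[(Lam A)ᵐᵒᵖ] (U × V)) (ψ : (U × V) →ₗ[(Lam A)ᵐᵒᵖ] (X × Y)),
      Function.Injective φ → Function.Surjective ψ →
      LinearMap.range φ = LinearMap.ker ψ →
      IsProjCover (Lam A)ᵐᵒᵖ ψ →
      ∀ (α : K →ₗ[Aᵐᵒᵖ] U) (γ : U →ₗ[Aᵐᵒᵖ] X),
        (∀ kk : K, (φ (kk, 0)).1 = α kk) → (∀ u : U, (ψ (u, 0)).1 = γ u) →
        Function.Injective α ∧ Function.Surjective γ ∧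
          LinearMap.range α = LinearMap.ker γ ∧ IsProjCover Aᵐᵒᵖ γ ∧
          Nonempty (K ≃ₗ[Aᵐᵒᵖ] LinearMap.ker γ) := by
  letI := th.module
  letI := tg.module
  letI := tf.module
  intro φ ψ hφ hψ hrange hcov α γ hα hγ
  -- the idempotent `e`
  set e : (Lam A)ᵐᵒᵖ := op (eE A) with he
  -- action of `e` on the three triple modules
  have hsmulK : ∀ p : K × L, e • p = (p.1, 0) := by
    intro p
    apply Prod.ext
    · show op (1 : A) • p.1 = p.1
      rw [op_one, one_smul]
    · show op (0 : BB A) • p.2 + th.f p.1 (0 : Sq A) = 0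
      rw [op_zero, zero_smul, th.f_zero_right, add_zero]
  have hsmulUV : ∀ p : U × V, e • p = (p.1, 0) := by
    intro p
    apply Prod.ext
    · show op (1 : A) • p.1 = p.1
      rw [op_one, one_smul]
    · show op (0 : BB A) • p.2 + tg.f p.1 (0 : Sq A) = 0
      rw [op_zero, zero_smul, tg.f_zero_right, add_zero]
  have hsmulXY : ∀ p : X × Y, e • p = (p.1, 0) := by
    intro p
    apply Prod.ext
    · show op (1 : A) • p.1 = p.1
      rw [op_one, one_smul]
    · show op (0 : BB A) • p.2 + tf.f p.1 (0 : Sq A) = 0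
      rw [op_zero, zero_smul, tf.f_zero_right, add_zero]
  have hiA : ∀ (a : A) (u : U), (op (iE A a)) • ((u, 0) : U × V) = (op a • u, 0) := by
    intro a u
    apply Prod.ext
    · rfl
    · show op (0 : BB A) • (0 : V) + tg.f u (0 : Sq A) = 0
      rw [smul_zero, tg.f_zero_right, add_zero]
  -- the maps on second components vanish
  have hφ2 : ∀ kk : K, φ (kk, 0) = (α kk, 0) := by
    intro kk
    calc φ (kk, 0) = φ (e • ((kk, 0) : K × L)) := by rw [hsmulK]
      _ = e • φ (kk, 0) := map_smul φ e _
      _ = ((φ (kk, 0)).1, 0) := hsmulUV _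
      _ = (α kk, 0) := by rw [hα]
  have hψ2 : ∀ u : U, ψ (u, 0) = (γ u, 0) := by
    intro u
    calc ψ (u, 0) = ψ (e • ((u, 0) : U × V)) := by rw [hsmulUV]
      _ = e • ψ (u, 0) := map_smul ψ e _
      _ = ((ψ (u, 0)).1, 0) := hsmulXY _
      _ = (γ u, 0) := by rw [hγ]
  -- injectivity of α
  have hinjα : Function.Injective α := by
    intro k1 k2 hk
    have h1 : φ (k1, 0) = φ (k2, 0) := by rw [hφ2, hφ2, hk]
    have h2 := hφ h1
    exact congrArg Prod.fst h2
  -- surjectivity of γ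
  have hsurjγ : Function.Surjective γ := by
    intro x
    obtain ⟨p, hp⟩ := hψ ((x, 0) : X × Y)
    refine ⟨p.1, ?_⟩
    have h1 : ψ (p.1, 0) = ((x, 0) : X × Y) := by
      have : ψ (e • p) = e • ((x, 0) : X × Y) := by rw [map_smul, hp]
      rw [hsmulUV, hsmulXY] at this
      exact this
    rw [hψ2] at h1
    exact congrArg Prod.fst h1
  -- range α = ker γ
  have hrangeαγ : LinearMap.range α = LinearMap.ker γ := by
    ext u
    simp only [LinearMap.mem_range, LinearMap.mem_ker]
    constructor
    · rintro ⟨kk, rfl⟩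
      have h0 : ψ (α kk, 0) = 0 := by
        rw [← hφ2]
        have hm : φ (kk, 0) ∈ LinearMap.ker ψ := by
          rw [← hrange]; exact LinearMap.mem_range_self φ (kk, 0)
        exact hm
      have h1 := hψ2 (α kk)
      rw [h0] at h1
      exact (congrArg Prod.fst h1.symm)
    · intro hu
      have h0 : ψ (u, 0) = 0 := by
        rw [hψ2, hu]
        rfl
      have hm : ((u, 0) : U × V) ∈ LinearMap.range φ := by
        rw [hrange]; exact h0
      obtain ⟨q, hq⟩ := hm
      refine ⟨q.1, ?_⟩
      have hq1 : φ (q.1, 0) = (u, 0) := by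
        have : φ (e • q) = e • ((u, 0) : U × V) := by rw [map_smul, hq]
        rw [hsmulK, hsmulUV] at this
        exact this
      have h2 := hα q.1
      rw [hq1] at h2
      exact h2.symm
  -- projectivity of U over Aᵐᵒᵖ
  have hproj : Module.Projective Aᵐᵒᵖ U := by
    obtain ⟨s, hs⟩ := (Module.projective_def').mp hcov.1
    set π : (Lam A)ᵐᵒᵖ →+* Aᵐᵒᵖ := RingHom.op (lamToA A) with hπ
    set T : ((U × V) →₀ (Lam A)ᵐᵒᵖ) →+ (U →₀ Aᵐᵒᵖ) :=
      (Finsupp.mapDomain.addMonoidHom Prod.fst).comp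
        (Finsupp.mapRange.addMonoidHom π.toAddMonoidHom) with hT
    have hTadd : ∀ g₁ g₂, T (g₁ + g₂) = T g₁ + T g₂ := fun g₁ g₂ => map_add T g₁ g₂
    have hTsingle : ∀ (p : U × V) (c : (Lam A)ᵐᵒᵖ),
        T (Finsupp.single p c) = Finsupp.single p.1 (π c) := by
      intro p c
      rw [hT]
      show Finsupp.mapDomain Prod.fst
        (Finsupp.mapRange π π.toAddMonoidHom.map_zero (Finsupp.single p c)) = _
      rw [Finsupp.mapRange_single, Finsupp.mapDomain_single]
    have hTkey : ∀ g : (U × V) →₀ (Lam A)ᵐᵒᵖ,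
        Finsupp.linearCombination Aᵐᵒᵖ id (T g)
          = (Finsupp.linearCombination (Lam A)ᵐᵒᵖ id g).1 := by
      intro g
      induction g using Finsupp.induction_linear with
      | zero =>
        rw [hT]
        simp
      | add f g hf hg =>
        rw [hTadd, map_add, map_add, hf, hg]
        rfl
      | single p c =>
        rw [hTsingle, Finsupp.linearCombination_single, Finsupp.linearCombination_single]
        show π c • p.1 = (c • p).1
        rfl
    have hTsmul : ∀ (a : Aᵐᵒᵖ) (g : (U × V) →₀ (Lam A)ᵐᵒᵖ),
        T ((op (iE A (unop a))) • g) = a • T g := by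
      intro a g
      have h1 : Finsupp.mapRange (⇑π) π.toAddMonoidHom.map_zero ((op (iE A (unop a))) • g)
          = a • Finsupp.mapRange (⇑π) π.toAddMonoidHom.map_zero g := by
        ext x
        rw [Finsupp.smul_apply, Finsupp.mapRange_apply, Finsupp.mapRange_apply,
          Finsupp.smul_apply, smul_eq_mul, smul_eq_mul, map_mul]
        congr 1
      rw [hT]
      show Finsupp.mapDomain Prod.fst
          (Finsupp.mapRange π π.toAddMonoidHom.map_zero ((op (iE A (unop a))) • g))
        = a • Finsupp.mapDomain Prod.fst
          (Finsupp.mapRange π π.toAddMonoidHom.map_zero g)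
      rw [h1, Finsupp.mapDomain_smul]
    let sA : U →ₗ[Aᵐᵒᵖ] (U →₀ Aᵐᵒᵖ) :=
      { toFun := fun u => T (s (u, 0))
        map_add' := fun u u' => by
          have : ((u + u', (0 : V)) : U × V) = (u, 0) + (u', 0) := by
            apply Prod.ext
            · rfl
            · exact (add_zero _).symm
          show T (s (u + u', 0)) = T (s (u, 0)) + T (s (u', 0))
          rw [this, map_add, hTadd]
        map_smul' := fun a u => by
          have h1 : ((a • u, (0 : V)) : U × V) = (op (iE A (unop a))) • ((u, 0) : U × V) :=
            (hiA (unop a) u).symm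
          show T (s (a • u, 0)) = a • T (s (u, 0))
          rw [h1, map_smul, hTsmul] }
    refine Module.projective_def'.mpr ⟨sA, LinearMap.ext fun u => ?_⟩
    have h := DFunLike.congr_fun hs ((u, 0) : U × V)
    simp only [LinearMap.comp_apply, LinearMap.id_apply] at h ⊢
    show Finsupp.linearCombination Aᵐᵒᵖ id (T (s (u, 0))) = u
    rw [hTkey, h]
  -- the kernel of γ is superfluous
  have hsmall : ∀ N : Submodule Aᵐᵒᵖ U, N ⊔ LinearMap.ker γ = ⊤ → N = ⊤ := by
    intro N hN
    let N' : Submodule (Lam A)ᵐᵒᵖ (U × V) :=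
      { carrier := {p : U × V | p.1 ∈ N}
        add_mem' := fun hp hq => N.add_mem hp hq
        zero_mem' := N.zero_mem
        smul_mem' := fun c p hp => by
          show (c • p).1 ∈ N
          show op ((unop c).fst.1) • p.1 ∈ N
          exact N.smul_mem _ hp }
    have hsup : N' ⊔ LinearMap.ker ψ = ⊤ := by
      rw [eq_top_iff]
      rintro p -
      have hp1 : p.1 ∈ N ⊔ LinearMap.ker γ := by rw [hN]; trivial
      obtain ⟨n, hn, c, hc, hnc⟩ := Submodule.mem_sup.mp hp1
      have hdec : p = (n, p.2) + (c, 0) := by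
        apply Prod.ext
        · exact hnc.symm
        · exact (add_zero _).symm
      rw [hdec]
      refine Submodule.add_mem_sup (show ((n, p.2) : U × V) ∈ N' from hn) ?_
      show ((c, 0) : U × V) ∈ LinearMap.ker ψ
      rw [LinearMap.mem_ker, hψ2]
      rw [LinearMap.mem_ker] at hc
      rw [hc]
      rfl
    have htop := hcov.2.2 N' hsup
    rw [eq_top_iff]
    rintro u -
    have : ((u, 0) : U × V) ∈ N' := by rw [htop]; trivial
    exact this
  exact ⟨hinjα, hsurjγ, hrangeαγ, ⟨hproj, hsurjγ, hsmall⟩,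
    ⟨(LinearEquiv.ofInjective α hinjα).trans (LinearEquiv.ofEq _ _ hrangeαγ)⟩⟩
end

section
/- Let A be an Artin algebra, B = T(A/rad(A)), and Λ = (A, A/rad(A); 0, B) the upper triangular matrix algebra. Then del(A) ≤ del(Λ). -/
open CategoryTheory MulOpposite

universe u

section Corner
variable (A : Type u) [Ring A]

/-- The idempotent `e = diag(1,0)` of `Λ`. -/
noncomputable def eL : Lam A := TrivSqZeroExt.inl ((1:A), (0 : BB A))

/-- The (non-unital) embedding `A → Λ`, `a ↦ diag(a,0)`. -/
noncomputable def iotL (a : A) : Lam A := TrivSqZeroExt.inl (a, (0 : BB A))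

lemma iotL_fst (a : A) : ((iotL A a).fst).1 = a := rfl
lemma iotL_snd (a : A) : (iotL A a).snd = 0 := rfl

lemma iotL_add (a b : A) : iotL A (a + b) = iotL A a + iotL A b := by
  show TrivSqZeroExt.inl ((a+b, 0) : A × BB A) = _
  rw [show ((a+b,0) : A × BB A) = (a,0)+(b,0) by ext <;> simp, TrivSqZeroExt.inl_add]
  rfl

lemma iotL_zero : iotL A 0 = 0 := by
  rfl

lemma iotL_inj : Function.Injective (iotL A) := by
  intro a b h
  have := congrArg (fun x : Lam A => (x.fst).1) h
  exact this

lemma iotL_mul (a b : A) : iotL A a * iotL A b = iotL A (a * b) := by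
  refine (TrivSqZeroExt.inl_mul_inl (M := MM A) ((a,0) : A × BB A) ((b,0) : A × BB A)).trans ?_
  show TrivSqZeroExt.inl (((a,0) : A × BB A) * (b,0)) = TrivSqZeroExt.inl ((a*b, 0) : A × BB A)
  rw [show ((a,0) : A × BB A)*(b,0) = (a*b, 0) by ext <;> simp]

lemma mul_eL (x : Lam A) : x * eL A = iotL A ((x.fst).1) := by
  refine TrivSqZeroExt.ext ?_ ?_
  · show x.fst * ((1:A), (0:BB A)) = ((x.fst).1, 0)
    ext <;> simp
  · show x.fst • (0 : MM A) + op (((1:A), (0:BB A)) : A × BB A) • x.snd = 0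
    rw [smul_zero, zero_add]
    show (show Sq A from x.snd) * (bbFst A (0 : BB A)) = 0
    rw [map_zero, mul_zero]

lemma eL_mul_iotL (a : A) : eL A * iotL A a = iotL A a := by
  show iotL A 1 * iotL A a = iotL A a
  rw [iotL_mul, one_mul]

lemma eL_idem : eL A * eL A = eL A := eL_mul_iotL A 1

end Corner

section Fix
variable (A : Type u) [Ring A]

/-- The scalar `ε = op e` in `Λᵐᵒᵖ`. -/
noncomputable def epsL : (Lam A)ᵐᵒᵖ := op (eL A)

/-- The scalar `op (ι a)` in `Λᵐᵒᵖ`, for `a : Aᵐᵒᵖ`. -/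
noncomputable def aopL (a : Aᵐᵒᵖ) : (Lam A)ᵐᵒᵖ := op (iotL A a.unop)

lemma epsL_mul (r : (Lam A)ᵐᵒᵖ) : epsL A * r = aopL A (op ((r.unop.fst).1)) := by
  show op (r.unop * eL A) = _
  rw [mul_eL]; rfl

lemma aopL_mul (a b : Aᵐᵒᵖ) : aopL A (a * b) = aopL A a * aopL A b := by
  show op (iotL A (b.unop * a.unop)) = op (iotL A b.unop * iotL A a.unop)
  rw [iotL_mul]

lemma aopL_one : aopL A 1 = epsL A := rfl

lemma epsL_mul_aopL (a : Aᵐᵒᵖ) : epsL A * aopL A a = aopL A a := by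
  show op (iotL A a.unop * eL A) = op (iotL A a.unop)
  rw [mul_eL, iotL_fst]

lemma aopL_mul_epsL (a : Aᵐᵒᵖ) : aopL A a * epsL A = aopL A a := by
  show op (eL A * iotL A a.unop) = op (iotL A a.unop)
  rw [eL_mul_iotL]

lemma aopL_add (a b : Aᵐᵒᵖ) : aopL A (a + b) = aopL A a + aopL A b := by
  show op (iotL A (a.unop + b.unop)) = _
  rw [iotL_add]; rfl

lemma aopL_zero : aopL A 0 = 0 := by
  show op (iotL A 0) = 0
  rw [iotL_zero]; rfl

lemma epsL_mul_epsL : epsL A * epsL A = epsL A := by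
  rw [← aopL_one, ← aopL_mul, one_mul]

lemma unop_fst_aopL (a : Aᵐᵒᵖ) : (((aopL A a).unop.fst).1 : A) = a.unop := rfl

variable (Z : Type u) [AddCommGroup Z] [Module (Lam A)ᵐᵒᵖ Z]

/-- The fixed points of `ε` in a `Λᵐᵒᵖ`-module, i.e. `Zε` (the "`A`-corner" `Ze`). -/
def Fx : Type u := {z : Z // epsL A • z = z}

namespace Fx

variable {A Z}

lemma fix (z : Fx A Z) : epsL A • z.1 = z.1 := z.2

lemma eps_smul_mem (z : Z) : epsL A • (epsL A • z) = epsL A • z := by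
  rw [← mul_smul, epsL_mul_epsL]

lemma eps_aop_smul (a : Aᵐᵒᵖ) (z : Z) : epsL A • (aopL A a • z) = aopL A a • z := by
  rw [← mul_smul, epsL_mul_aopL]

instance : AddCommGroup (Fx A Z) :=
  inferInstanceAs (AddCommGroup
    ({ carrier := {z : Z | epsL A • z = z}
       add_mem' := fun ha hb => by simp only [Set.mem_setOf_eq] at *; rw [smul_add, ha, hb]
       zero_mem' := smul_zero _
       neg_mem' := fun ha => by simp only [Set.mem_setOf_eq] at *; rw [smul_neg, ha] } :
      AddSubgroup Z))

lemma val_add (x y : Fx A Z) : (x + y).1 = x.1 + y.1 := rfl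
lemma val_zero : ((0 : Fx A Z)).1 = 0 := rfl
lemma val_sub (x y : Fx A Z) : (x - y).1 = x.1 - y.1 := rfl

@[ext] lemma ext {x y : Fx A Z} (h : x.1 = y.1) : x = y := Subtype.ext h

lemma veq {x y : Fx A Z} (h : x = y) : x.1 = y.1 := by rw [h]

noncomputable instance : Module Aᵐᵒᵖ (Fx A Z) where
  smul a z := ⟨aopL A a • z.1, eps_aop_smul a z.1⟩
  one_smul z := by
    apply ext
    show aopL A 1 • z.1 = z.1
    rw [aopL_one, z.fix]
  mul_smul a b z := by
    apply ext
    show aopL A (a * b) • z.1 = aopL A a • (aopL A b • z.1)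
    rw [aopL_mul, mul_smul]
  smul_add a x y := by
    apply ext
    show aopL A a • (x.1 + y.1) = aopL A a • x.1 + aopL A a • y.1
    rw [smul_add]
  smul_zero a := by
    apply ext
    show aopL A a • (0 : Z) = 0
    rw [smul_zero]
  add_smul a b z := by
    apply ext
    show aopL A (a + b) • z.1 = aopL A a • z.1 + aopL A b • z.1
    rw [aopL_add, add_smul]
  zero_smul z := by
    apply ext
    show aopL A 0 • z.1 = 0
    rw [aopL_zero, zero_smul]

lemma val_smul (a : Aᵐᵒᵖ) (z : Fx A Z) : (a • z).1 = aopL A a • z.1 := rfl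

end Fx
end Fix

section FxMap
variable {A : Type u} [Ring A]
variable {Z W V : Type u} [AddCommGroup Z] [Module (Lam A)ᵐᵒᵖ Z]
  [AddCommGroup W] [Module (Lam A)ᵐᵒᵖ W] [AddCommGroup V] [Module (Lam A)ᵐᵒᵖ V]

/-- Functoriality of `Fx` on linear maps. -/
noncomputable def fxMap (f : Z →ₗ[(Lam A)ᵐᵒᵖ] W) : Fx A Z →ₗ[Aᵐᵒᵖ] Fx A W where
  toFun z := ⟨f z.1, by rw [← map_smul, z.fix]⟩
  map_add' x y := by apply Fx.ext; show f (x.1 + y.1) = f x.1 + f y.1; rw [map_add]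
  map_smul' a z := by
    apply Fx.ext
    show f (aopL A a • z.1) = aopL A a • f z.1
    rw [map_smul]

lemma fxMap_val (f : Z →ₗ[(Lam A)ᵐᵒᵖ] W) (z : Fx A Z) : (fxMap f z).1 = f z.1 := rfl

lemma fxMap_comp (f : Z →ₗ[(Lam A)ᵐᵒᵖ] W) (g : W →ₗ[(Lam A)ᵐᵒᵖ] V) (z : Fx A Z) :
    fxMap g (fxMap f z) = fxMap (g ∘ₗ f) z := rfl

lemma fxMap_surj {f : Z →ₗ[(Lam A)ᵐᵒᵖ] W} (hf : Function.Surjective f) :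
    Function.Surjective (fxMap f) := by
  rintro ⟨w, hw⟩
  obtain ⟨z, hz⟩ := hf w
  refine ⟨⟨epsL A • z, Fx.eps_smul_mem z⟩, ?_⟩
  apply Fx.ext
  show f (epsL A • z) = w
  rw [map_smul, hz, hw]

/-- Functoriality of `Fx` on linear equivalences. -/
noncomputable def fxEquiv (f : Z ≃ₗ[(Lam A)ᵐᵒᵖ] W) : Fx A Z ≃ₗ[Aᵐᵒᵖ] Fx A W :=
  { fxMap (f.toLinearMap) with
    invFun := fxMap (f.symm.toLinearMap)
    left_inv := fun z => by apply Fx.ext; show f.symm (f z.1) = z.1; simp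
    right_inv := fun w => by apply Fx.ext; show f (f.symm w.1) = w.1; simp }

/-- `Fx` commutes with binary products. -/
noncomputable def fxProdEquiv : Fx A (Z × W) ≃ₗ[Aᵐᵒᵖ] (Fx A Z × Fx A W) where
  toFun p := (⟨p.1.1, congrArg Prod.fst p.2⟩, ⟨p.1.2, congrArg Prod.snd p.2⟩)
  invFun p := ⟨(p.1.1, p.2.1), Prod.ext p.1.2 p.2.2⟩
  left_inv p := rfl
  right_inv p := rfl
  map_add' p q := rfl
  map_smul' a p := rfl

end FxMap

section FxProj
variable {A : Type u} [Ring A]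

/-- The "corner coordinate" map `Λᵐᵒᵖ → Aᵐᵒᵖ`. -/
noncomputable def uL (r : (Lam A)ᵐᵒᵖ) : Aᵐᵒᵖ := op ((r.unop.fst).1)

lemma uL_aopL (a : Aᵐᵒᵖ) : uL (aopL A a) = a := rfl

lemma uL_zero : uL (0 : (Lam A)ᵐᵒᵖ) = 0 := rfl

lemma uL_add (r s : (Lam A)ᵐᵒᵖ) : uL (r + s) = uL r + uL s := rfl

lemma aopL_uL (r : (Lam A)ᵐᵒᵖ) : aopL A (uL r) = epsL A * r := (epsL_mul A r).symm

lemma uL_aopL_mul (a : Aᵐᵒᵖ) (r : (Lam A)ᵐᵒᵖ) : uL (aopL A a * r) = a * uL r := by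
  show op (((r.unop * iotL A a.unop).fst).1) = op ((r.unop.fst).1 * a.unop)
  show op ((r.unop.fst * (iotL A a.unop).fst).1) = _
  rfl

variable (A) in
/-- `Fx` of a free module is free: `(ι →₀ Λᵐᵒᵖ)ε ≃ (ι →₀ Aᵐᵒᵖ)`. -/
noncomputable def fxFinsuppEquiv (ι : Type u) :
    Fx A (ι →₀ (Lam A)ᵐᵒᵖ) ≃ₗ[Aᵐᵒᵖ] (ι →₀ Aᵐᵒᵖ) where
  toFun f := Finsupp.mapRange uL uL_zero f.1
  invFun g := ⟨Finsupp.mapRange (aopL A) (aopL_zero A) g, by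
    ext i
    simp only [Finsupp.smul_apply, Finsupp.mapRange_apply, smul_eq_mul]
    rw [epsL_mul_aopL]⟩
  left_inv f := by
    apply Fx.ext
    ext i
    rw [Finsupp.mapRange_apply, Finsupp.mapRange_apply, aopL_uL]
    have := congrFun (congrArg DFunLike.coe f.2) i
    rw [Finsupp.smul_apply] at this
    exact this
  right_inv g := by
    ext i
    rw [Finsupp.mapRange_apply, Finsupp.mapRange_apply, uL_aopL]
  map_add' f g := by
    ext i
    simp only [Fx.val_add, Finsupp.mapRange_apply, Finsupp.add_apply, uL_add]
  map_smul' a f := by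
    ext i
    simp only [RingHom.id_apply, Finsupp.smul_apply, Finsupp.mapRange_apply, Fx.val_smul]
    rw [smul_eq_mul, uL_aopL_mul]
    rfl

variable {Z : Type u} [AddCommGroup Z] [Module (Lam A)ᵐᵒᵖ Z]

lemma fx_projective (h : Module.Projective (Lam A)ᵐᵒᵖ Z) :
    Module.Projective Aᵐᵒᵖ (Fx A Z) := by
  obtain ⟨s, hs⟩ := Module.projective_def.mp h
  refine Module.Projective.of_split
    (M := Z →₀ Aᵐᵒᵖ)
    ((fxFinsuppEquiv A Z).toLinearMap ∘ₗ fxMap s)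
    (fxMap (Finsupp.linearCombination (Lam A)ᵐᵒᵖ (id : Z → Z)) ∘ₗ
      (fxFinsuppEquiv A Z).symm.toLinearMap) ?_
  ext z
  show (Finsupp.linearCombination (Lam A)ᵐᵒᵖ (id : Z → Z))
      ((fxFinsuppEquiv A Z).symm ((fxFinsuppEquiv A Z) (fxMap s z))).1 = z.1
  rw [LinearEquiv.symm_apply_apply]
  exact hs z.1

end FxProj

section FxFinCover
variable (A : Type u) [Ring A]
variable {P X : Type u} [AddCommGroup P] [Module (Lam A)ᵐᵒᵖ P]
  [AddCommGroup X] [Module (Lam A)ᵐᵒᵖ X]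

/-- The canonical projection `Z → Fx A Z`, `z ↦ εz`. -/
noncomputable def fxProj (z : P) : Fx A P := ⟨epsL A • z, Fx.eps_smul_mem z⟩

lemma fxProj_eq_self (z : Fx A P) : fxProj A z.1 = z := Fx.ext z.2

lemma fxProj_smul (c : (Lam A)ᵐᵒᵖ) (z : P) : fxProj A (c • z) = uL c • fxProj A z := by
  apply Fx.ext
  show epsL A • c • z = aopL A (uL c) • (epsL A • z)
  rw [← mul_smul, ← mul_smul, aopL_mul_epsL, aopL_uL]

lemma fxProj_zero : fxProj A (0 : P) = 0 := Fx.ext (smul_zero (epsL A))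

lemma fxProj_add (y z : P) : fxProj A (y + z) = fxProj A y + fxProj A z :=
  Fx.ext (smul_add (epsL A) y z)

lemma fx_finite (h : Module.Finite (Lam A)ᵐᵒᵖ P) : Module.Finite Aᵐᵒᵖ (Fx A P) := by
  classical
  obtain ⟨s, hs⟩ := h.fg_top
  refine ⟨⟨s.image (fxProj A), ?_⟩⟩
  have key : ∀ w ∈ Submodule.span (Lam A)ᵐᵒᵖ (s : Set P), fxProj A w ∈
      Submodule.span Aᵐᵒᵖ ((s.image (fxProj A) : Finset (Fx A P)) : Set (Fx A P)) := by
    intro w hx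
    induction hx using Submodule.span_induction with
    | mem z hz => exact Submodule.subset_span (by simpa using ⟨z, hz, rfl⟩)
    | zero => rw [fxProj_zero]; exact Submodule.zero_mem _
    | add y z _ _ hy hz => rw [fxProj_add]; exact Submodule.add_mem _ hy hz
    | smul c z _ hz => rw [fxProj_smul]; exact Submodule.smul_mem _ _ hz
  rw [eq_top_iff]
  rintro x -
  have hmem := key x.1 (hs ▸ Submodule.mem_top)
  rwa [fxProj_eq_self] at hmem

lemma fx_cover {f : P →ₗ[(Lam A)ᵐᵒᵖ] X} (hf : IsProjCover (Lam A)ᵐᵒᵖ f)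
    (hP : Module.Projective (Lam A)ᵐᵒᵖ P) : IsProjCover Aᵐᵒᵖ (fxMap f) := by
  refine ⟨fx_projective hP, fxMap_surj hf.2.1, ?_⟩
  intro N hN
  set T : Submodule (Lam A)ᵐᵒᵖ P :=
    { carrier := {x : P | fxProj A x ∈ N}
      add_mem' := fun {y z} hy hz => by
        simp only [Set.mem_setOf_eq] at *
        rw [fxProj_add]; exact N.add_mem hy hz
      zero_mem' := by
        simp only [Set.mem_setOf_eq]
        rw [fxProj_zero]; exact N.zero_mem
      smul_mem' := fun c z hz => by
        simp only [Set.mem_setOf_eq] at *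
        rw [fxProj_smul]; exact N.smul_mem _ hz } with hT
  have hTtop : T = ⊤ := by
    apply hf.2.2
    rw [eq_top_iff]
    rintro p -
    have : fxProj A p ∈ N ⊔ LinearMap.ker (fxMap f) := by rw [hN]; exact Submodule.mem_top
    obtain ⟨n, hn, k, hk, hnk⟩ := Submodule.mem_sup.mp this
    have hkker : k.1 ∈ LinearMap.ker f := by
      have h0 : fxMap f k = 0 := LinearMap.mem_ker.mp hk
      have h1 : f k.1 = 0 := Fx.veq h0
      exact LinearMap.mem_ker.mpr h1
    have hpk : p - k.1 ∈ T := by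
      show fxProj A (p - k.1) ∈ N
      have : fxProj A (p - k.1) = n := by
        apply Fx.ext
        show epsL A • (p - k.1) = n.1
        have h1 : epsL A • k.1 = k.1 := k.2
        have h2 : n.1 + k.1 = epsL A • p := Fx.veq hnk
        rw [smul_sub, h1, ← h2]
        abel
      rw [this]; exact hn
    have : (p - k.1) + k.1 ∈ T ⊔ LinearMap.ker f := Submodule.add_mem_sup hpk hkker
    simpa using this
  rw [eq_top_iff]
  rintro x -
  have : x.1 ∈ T := hTtop ▸ Submodule.mem_top
  have hx : fxProj A x.1 ∈ N := this
  rwa [fxProj_eq_self] at hx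

/-- The kernel of `Fx f` is `Fx` of the kernel. -/
noncomputable def fxKerEquiv (f : P →ₗ[(Lam A)ᵐᵒᵖ] X) :
    (LinearMap.ker (fxMap (A := A) f)) ≃ₗ[Aᵐᵒᵖ] Fx A (LinearMap.ker f) where
  toFun z := ⟨⟨z.1.1, congrArg Subtype.val z.2⟩, Subtype.ext z.1.2⟩
  invFun w := ⟨⟨w.1.1, congrArg Subtype.val w.2⟩, Fx.ext w.1.2⟩
  left_inv z := rfl
  right_inv w := rfl
  map_add' x y := rfl
  map_smul' a x := rfl

end FxFinCover

section Summand
variable {R : Type u} [Ring R]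

lemma isDirectSummandOf_congr {X X' Y Y' : Type u}
    [AddCommGroup X] [Module R X] [AddCommGroup X'] [Module R X']
    [AddCommGroup Y] [Module R Y] [AddCommGroup Y'] [Module R Y']
    (eX : X ≃ₗ[R] X') (eY : Y ≃ₗ[R] Y') (h : IsDirectSummandOf R X Y) :
    IsDirectSummandOf R X' Y' := by
  obtain ⟨i, r, hri⟩ := h
  refine ⟨eY.toLinearMap ∘ₗ i ∘ₗ eX.symm.toLinearMap,
    eX.toLinearMap ∘ₗ r ∘ₗ eY.symm.toLinearMap, ?_⟩
  ext x
  have := DFunLike.congr_fun hri (eX.symm x)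
  simp only [LinearMap.comp_apply, LinearMap.id_apply] at this ⊢
  simp only [LinearEquiv.coe_coe, LinearEquiv.symm_apply_apply, this,
    LinearEquiv.apply_symm_apply]

end Summand

section FxSummand
variable {A : Type u} [Ring A]
variable {Z Y : Type u} [AddCommGroup Z] [Module (Lam A)ᵐᵒᵖ Z]
  [AddCommGroup Y] [Module (Lam A)ᵐᵒᵖ Y]

lemma fx_summand (h : IsDirectSummandOf (Lam A)ᵐᵒᵖ Z Y) :
    IsDirectSummandOf Aᵐᵒᵖ (Fx A Z) (Fx A Y) := by
  obtain ⟨i, r, hri⟩ := h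
  refine ⟨fxMap i, fxMap r, ?_⟩
  refine LinearMap.ext fun z => ?_
  rw [LinearMap.comp_apply, fxMap_comp, hri]
  exact Fx.ext rfl

end FxSummand

section FxSyzygy
variable {A : Type u} [Ring A]

lemma fx_syzygy {d : ℕ} {Z K : ModuleCat.{u} (Lam A)ᵐᵒᵖ}
    (h : IsSyzygy (Lam A)ᵐᵒᵖ d Z K) :
    ∀ (X' : ModuleCat.{u} Aᵐᵒᵖ) (g : X' ≃ₗ[Aᵐᵒᵖ] Fx A Z),
    ∃ K' : ModuleCat.{u} Aᵐᵒᵖ, IsSyzygy Aᵐᵒᵖ d X' K' ∧ Nonempty (K' ≃ₗ[Aᵐᵒᵖ] Fx A K) := by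
  induction h with
  | zero Z => exact fun X' g => ⟨X', IsSyzygy.zero X', ⟨g⟩⟩
  | succ f hf hsyz IH =>
    intro X' g
    rename_i P
    let F1 : ModuleCat.of Aᵐᵒᵖ (Fx A P) ⟶ X' :=
      ModuleCat.ofHom (g.symm.toLinearMap ∘ₗ fxMap f.hom)
    have hker : LinearMap.ker F1.hom = LinearMap.ker (fxMap (A := A) f.hom) := by
      ext x
      constructor
      · intro hx
        have : g.symm ((fxMap f.hom) x) = 0 := hx
        have h2 : (fxMap f.hom) x = 0 := by
          have := congrArg g this
          simpa using this
        exact h2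
      · intro hx
        have hx' : (fxMap f.hom) x = 0 := hx
        show g.symm ((fxMap f.hom) x) = 0
        rw [hx', map_zero]
    have hcover : IsProjCover Aᵐᵒᵖ F1.hom := by
      refine ⟨fx_projective hf.1, ?_, ?_⟩
      · have hsurj : Function.Surjective (⇑g.symm.toLinearMap ∘ ⇑(fxMap f.hom)) :=
          g.symm.surjective.comp (fxMap_surj hf.2.1)
        rwa [← LinearMap.coe_comp] at hsurj
      · intro N hN
        rw [hker] at hN
        exact (fx_cover A hf hf.1).2.2 N hN
    have γ : (ModuleCat.of Aᵐᵒᵖ (LinearMap.ker F1.hom) : Type u)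
        ≃ₗ[Aᵐᵒᵖ] Fx A (ModuleCat.of (Lam A)ᵐᵒᵖ (LinearMap.ker f.hom) : Type u) :=
      (LinearEquiv.ofEq _ _ hker).trans (fxKerEquiv A f.hom)
    obtain ⟨K', hK', ⟨δ⟩⟩ := IH (ModuleCat.of Aᵐᵒᵖ (LinearMap.ker F1.hom)) γ
    exact ⟨K', IsSyzygy.succ F1 hcover hK', ⟨δ⟩⟩

end FxSyzygy

section Final
variable (A : Type u) [Ring A]

/-- The projection `Λ → A`. -/
noncomputable def piL : Lam A →+* A := (RingHom.fst A (BB A)).comp (lamFst A)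

lemma piL_iotL (a : A) : piL A (iotL A a) = a := rfl

lemma piL_surj : Function.Surjective (piL A) := fun a => ⟨iotL A a, rfl⟩

/-- Restriction of scalars along `Λᵐᵒᵖ → Aᵐᵒᵖ`. -/
noncomputable def resMod (S : Type u) [AddCommGroup S] [Module Aᵐᵒᵖ S] :
    Module (Lam A)ᵐᵒᵖ S :=
  Module.compHom S (RingHom.op (piL A))

lemma delLevel_le (S : ModuleCat.{u} Aᵐᵒᵖ) (hS : IsSimpleModule Aᵐᵒᵖ S) :
    delLevel Aᵐᵒᵖ S ≤ delAlgRight (Lam A) := by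
  letI : Module (Lam A)ᵐᵒᵖ (S : Type u) := resMod A S
  have hsmul : ∀ (r : (Lam A)ᵐᵒᵖ) (z : (S : Type u)),
      r • z = (op (piL A r.unop) : Aᵐᵒᵖ) • z := fun r z => rfl
  have hfix : ∀ z : (S : Type u), epsL A • z = z := fun z => by
    rw [hsmul]
    show (op ((1 : A)) : Aᵐᵒᵖ) • z = z
    rw [op_one, one_smul]
  set St : ModuleCat.{u} (Lam A)ᵐᵒᵖ := ModuleCat.of (Lam A)ᵐᵒᵖ (S : Type u) with hSt
  -- S is A-linearly isomorphic to the corner of St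
  have hgsmul : ∀ (a : Aᵐᵒᵖ) (z : (S : Type u)), aopL A a • z = a • z := fun a z => by
    rw [hsmul]
    show (op (piL A (iotL A a.unop)) : Aᵐᵒᵖ) • z = a • z
    rw [piL_iotL]
    rfl
  let g : (S : Type u) ≃ₗ[Aᵐᵒᵖ] Fx A (St : Type u) :=
    { toFun := fun z => ⟨z, hfix z⟩
      invFun := fun z => z.1
      left_inv := fun z => rfl
      right_inv := fun z => Fx.ext rfl
      map_add' := fun x y => Fx.ext rfl
      map_smul' := fun a z => Fx.ext (by
        show a • z = aopL A a • z
        rw [hgsmul]) }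
  -- St is a simple Λᵐᵒᵖ-module
  have hStSimple : IsSimpleModule (Lam A)ᵐᵒᵖ (St : Type u) := by
    have hnt : Nontrivial (Submodule (Lam A)ᵐᵒᵖ (St : Type u)) := by
      have h0 : Nontrivial (S : Type u) := (Submodule.nontrivial_iff Aᵐᵒᵖ).mp hS.toNontrivial
      exact (Submodule.nontrivial_iff (Lam A)ᵐᵒᵖ).mpr h0
    have hbt : ∀ p : Submodule (Lam A)ᵐᵒᵖ (St : Type u), p = ⊥ ∨ p = ⊤ := by
      intro p
      -- transfer p to an Aᵐᵒᵖ-submodule with the same carrier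
      let q : Submodule Aᵐᵒᵖ (S : Type u) :=
        { carrier := (p : Set (St : Type u))
          add_mem' := fun hx hy => p.add_mem hx hy
          zero_mem' := p.zero_mem
          smul_mem' := fun a x hx => by
            have : a • x = (op (iotL A a.unop) : (Lam A)ᵐᵒᵖ) • x := (hgsmul a x).symm
            rw [this]
            exact p.smul_mem _ hx }
      rcases hS.eq_bot_or_eq_top q with hq | hq
      · left
        ext x
        have : x ∈ q ↔ x ∈ (⊥ : Submodule Aᵐᵒᵖ (S : Type u)) := by rw [hq]
        simp only [Submodule.mem_bot] at this ⊢
        exact this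
      · right
        ext x
        have : x ∈ q ↔ x ∈ (⊤ : Submodule Aᵐᵒᵖ (S : Type u)) := by rw [hq]
        simp only [Submodule.mem_top, iff_true] at this ⊢
        exact this
    exact { toNontrivial := hnt, eq_bot_or_eq_top := hbt }
  -- delLevel over A is at most delLevel of St over Λ
  have h1 : delLevel Aᵐᵒᵖ S ≤ delLevel (Lam A)ᵐᵒᵖ St := by
    apply sInf_le_sInf
    rintro e ⟨d, he, M, P, Sig, T, hMfin, hPproj, hPfin, hsyzS, hsyzM, hsummand⟩
    obtain ⟨S'', hS'', ⟨δS⟩⟩ := fx_syzygy hsyzS S g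
    obtain ⟨T', hT', ⟨δT⟩⟩ := fx_syzygy hsyzM (ModuleCat.of Aᵐᵒᵖ (Fx A (M : Type u)))
      (LinearEquiv.refl _ _)
    refine ⟨d, he, ModuleCat.of Aᵐᵒᵖ (Fx A (M : Type u)),
      ModuleCat.of Aᵐᵒᵖ (Fx A (P : Type u)), S'', T',
      fx_finite A hMfin, fx_projective hPproj, fx_finite A hPfin, hS'', hT', ?_⟩
    have h2 := fx_summand (A := A) hsummand
    let Pc : Type u := P
    let Tc : Type u := T
    have pe : Fx A (Pc × Tc) ≃ₗ[Aᵐᵒᵖ] (Fx A Pc × Fx A Tc) := fxProdEquiv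
    have e1 : Fx A ((Sig : Type u)) ≃ₗ[Aᵐᵒᵖ] (S'' : Type u) := LinearEquiv.symm δS
    have eT : Fx A Tc ≃ₗ[Aᵐᵒᵖ] (T' : Type u) := LinearEquiv.symm δT
    have e2 : (Fx A Pc × Fx A Tc) ≃ₗ[Aᵐᵒᵖ] (Fx A Pc × (T' : Type u)) :=
      LinearEquiv.prodCongr (LinearEquiv.refl Aᵐᵒᵖ (Fx A Pc)) eT
    exact isDirectSummandOf_congr e1 (LinearEquiv.trans pe e2) h2
  refine h1.trans ?_
  exact le_iSup₂ (f := fun (X : ModuleCat.{u} (Lam A)ᵐᵒᵖ)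
    (_ : IsSimpleModule (Lam A)ᵐᵒᵖ X) => delLevel (Lam A)ᵐᵒᵖ X) St hStSimple

end Final

/-- Let `A` be an Artin algebra, `B = T(A/rad(A))`, and
`Λ = (A, A/rad(A); 0, B)` the upper triangular matrix algebra.  Then
`del(A) ≤ del(Λ)`. -/
theorem stmt_10 (k : Type u) [CommRing k] [IsArtinianRing k]
    (A : Type u) [Ring A] [Algebra k A] [Module.Finite k A] :
    delAlgRight A ≤ delAlgRight (Lam A) := by
  refine iSup₂_le ?_
  intro S hS
  exact delLevel_le A S hS
end
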